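/- For every positive integer n, ζ({10}^n) = (10·(2π)^{10n} / (10n+5)!) · ( 1 − (2 cos(2π/5))^{10n+5} − (2 cos(4π/5))^{10n+5} ). -/

import Mathlib

open Real Finset

/-- Multiple zeta value with real exponents `a i`, summed over
`1 ≤ k₁ < k₂ < ⋯ < k_r`. -/
noncomputable def mzv {r : ℕ} (a : Fin r → ℝ) : ℝ :=
  ∑' f : {f : Fin r → ℕ // (∀ i, 1 ≤ f i) ∧ StrictMono f},
    ∏ i, ((f.1 i : ℝ)) ^ (-(a i))

/-- Multiple zeta star value with real exponents `a i`, summed over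
`1 ≤ k₁ ≤ k₂ ≤ ⋯ ≤ k_r`. -/
noncomputable def mzsv {r : ℕ} (a : Fin r → ℝ) : ℝ :=
  ∑' f : {f : Fin r → ℕ // (∀ i, 1 ≤ f i) ∧ Monotone f},
    ∏ i, ((f.1 i : ℝ)) ^ (-(a i))



set_option maxHeartbeats 4000000 in

private lemma key_expand (E : ℂ → ℂ) (η : ℂ) (hE : ∀ c d : ℂ, E c * E d = E (c + d))
    (hPhi : η ^ 8 - η ^ 6 + η ^ 4 - η ^ 2 + 1 = 0) :
    (E (η ^ 16) - E (η ^ 6)) * (E (η ^ 18) - E (η ^ 8)) * (E (η ^ 20) - E (η ^ 10)) *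
      (E (η ^ 22) - E (η ^ 12)) * (E (η ^ 24) - E (η ^ 14)) =
      E ((2 : ℂ) * η ^ 0) - E ((2 : ℂ) * η ^ 4 + (2 : ℂ) * η ^ 16) - E ((2 : ℂ) * η ^ 8 + (2 : ℂ) * η ^ 12) - E ((2 : ℂ) * η ^ 2) + E ((2 : ℂ) * η ^ 6 + (2 : ℂ) * η ^ 18) + E ((2 : ℂ) * η ^ 10 + (2 : ℂ) * η ^ 14) + E ((2 : ℂ) * η ^ 4) - E ((2 : ℂ) * η ^ 8 + (2 : ℂ) * η ^ 20) - E ((2 : ℂ) * η ^ 12 + (2 : ℂ) * η ^ 16) - E ((2 : ℂ) * η ^ 6) + E ((2 : ℂ) * η ^ 10 + (2 : ℂ) * η ^ 22) + E ((2 : ℂ) * η ^ 14 + (2 : ℂ) * η ^ 18) + E ((2 : ℂ) * η ^ 8) - E ((2 : ℂ) * η ^ 12 + (2 : ℂ) * η ^ 24) - E ((2 : ℂ) * η ^ 16 + (2 : ℂ) * η ^ 20) - E ((2 : ℂ) * η ^ 10) + E ((2 : ℂ) * η ^ 14 + (2 : ℂ) * η ^ 26) + E ((2 : ℂ) * η ^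 18 + (2 : ℂ) * η ^ 22) + E ((2 : ℂ) * η ^ 12) - E ((2 : ℂ) * η ^ 16 + (2 : ℂ) * η ^ 28) - E ((2 : ℂ) * η ^ 20 + (2 : ℂ) * η ^ 24) - E ((2 : ℂ) * η ^ 14) + E ((2 : ℂ) * η ^ 18 + (2 : ℂ) * η ^ 30) + E ((2 : ℂ) * η ^ 22 + (2 : ℂ) * η ^ 26) + E ((2 : ℂ) * η ^ 16) - E ((2 : ℂ) * η ^ 20 + (2 : ℂ) * η ^ 32) - E ((2 : ℂ) * η ^ 24 + (2 : ℂ) * η ^ 28) - E ((2 : ℂ) * η ^ 18) + E ((2 : ℂ) * η ^ 22 + (2 : ℂ) * η ^ 34) + E ((2 : ℂ) * η ^ 26 + (2 : ℂ) * η ^ 30) := by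
  have P0 : E (η ^ 16) * E (η ^ 18) * E (η ^ 20) * E (η ^ 22) * E (η ^ 24) = E ((2 : ℂ) + (0 : ℂ) * η ^ 2 + (2 : ℂ) * η ^ 4 + (-2 : ℂ) * η ^ 6) := by
    rw [hE, hE, hE, hE]; congr 1; linear_combination ((1 : ℂ) * η ^ 16 + (2 : ℂ) * η ^ 14 + (2 : ℂ) * η ^ 12 + (2 : ℂ) * η ^ 10 + (2 : ℂ) * η ^ 8 + (-2 : ℂ) * η ^ 4 + (-2 : ℂ) * η ^ 2 + (-2 : ℂ)) * hPhi
  have P1 : E (η ^ 16) * E (η ^ 18) * E (η ^ 20) * E (η ^ 22) * E (η ^ 14) = E ((2 : ℂ) + (0 : ℂ) * η ^ 2 + (0 : ℂ) * η ^ 4 + (-2 : ℂ) * η ^ 6) := by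
    rw [hE, hE, hE, hE]; congr 1; linear_combination ((1 : ℂ) * η ^ 14 + (2 : ℂ) * η ^ 12 + (2 : ℂ) * η ^ 10 + (2 : ℂ) * η ^ 8 + (2 : ℂ) * η ^ 6 + (-2 : ℂ) * η ^ 2 + (-2 : ℂ)) * hPhi
  have P2 : E (η ^ 16) * E (η ^ 18) * E (η ^ 20) * E (η ^ 12) * E (η ^ 24) = E ((2 : ℂ) + (-2 : ℂ) * η ^ 2 + (2 : ℂ) * η ^ 4 + (-2 : ℂ) * η ^ 6) := by
    rw [hE, hE, hE, hE]; congr 1; linear_combination ((1 : ℂ) * η ^ 16 + (1 : ℂ) * η ^ 14 + (1 : ℂ) * η ^ 12 + (2 : ℂ) * η ^ 10 + (2 : ℂ) * η ^ 8 + (-2 : ℂ)) * hPhi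
  have P3 : E (η ^ 16) * E (η ^ 18) * E (η ^ 20) * E (η ^ 12) * E (η ^ 14) = E ((2 : ℂ) + (-2 : ℂ) * η ^ 2 + (0 : ℂ) * η ^ 4 + (-2 : ℂ) * η ^ 6) := by
    rw [hE, hE, hE, hE]; congr 1; linear_combination ((1 : ℂ) * η ^ 12 + (2 : ℂ) * η ^ 10 + (2 : ℂ) * η ^ 8 + (2 : ℂ) * η ^ 6 + (2 : ℂ) * η ^ 4 + (-2 : ℂ)) * hPhi
  have P4 : E (η ^ 16) * E (η ^ 18) * E (η ^ 10) * E (η ^ 22) * E (η ^ 24) = E ((0 : ℂ) + (0 : ℂ) * η ^ 2 + (2 : ℂ) * η ^ 4 + (-2 : ℂ) * η ^ 6) := by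
    rw [hE, hE, hE, hE]; congr 1; linear_combination ((1 : ℂ) * η ^ 16 + (2 : ℂ) * η ^ 14 + (1 : ℂ) * η ^ 12 + (1 : ℂ) * η ^ 10 + (2 : ℂ) * η ^ 8 + (-2 : ℂ) * η ^ 4) * hPhi
  have P5 : E (η ^ 16) * E (η ^ 18) * E (η ^ 10) * E (η ^ 22) * E (η ^ 14) = E ((0 : ℂ) + (0 : ℂ) * η ^ 2 + (0 : ℂ) * η ^ 4 + (-2 : ℂ) * η ^ 6) := by
    rw [hE, hE, hE, hE]; congr 1; linear_combination ((1 : ℂ) * η ^ 14 + (1 : ℂ) * η ^ 12 + (1 : ℂ) * η ^ 10 + (2 : ℂ) * η ^ 8 + (2 : ℂ) * η ^ 6) * hPhi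
  have P6 : E (η ^ 16) * E (η ^ 18) * E (η ^ 10) * E (η ^ 12) * E (η ^ 24) = E ((0 : ℂ) + (-2 : ℂ) * η ^ 2 + (2 : ℂ) * η ^ 4 + (-2 : ℂ) * η ^ 6) := by
    rw [hE, hE, hE, hE]; congr 1; linear_combination ((1 : ℂ) * η ^ 16 + (1 : ℂ) * η ^ 14 + (1 : ℂ) * η ^ 10 + (2 : ℂ) * η ^ 8 + (2 : ℂ) * η ^ 2) * hPhi
  have P7 : E (η ^ 16) * E (η ^ 18) * E (η ^ 10) * E (η ^ 12) * E (η ^ 14) = E ((0 : ℂ) + (-2 : ℂ) * η ^ 2 + (0 : ℂ) * η ^ 4 + (-2 : ℂ) * η ^ 6) := by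
    rw [hE, hE, hE, hE]; congr 1; linear_combination ((1 : ℂ) * η ^ 10 + (2 : ℂ) * η ^ 8 + (2 : ℂ) * η ^ 6 + (2 : ℂ) * η ^ 4 + (2 : ℂ) * η ^ 2) * hPhi
  have P8 : E (η ^ 16) * E (η ^ 8) * E (η ^ 20) * E (η ^ 22) * E (η ^ 24) = E ((0 : ℂ) + (2 : ℂ) * η ^ 2 + (0 : ℂ) * η ^ 4 + (0 : ℂ) * η ^ 6) := by
    rw [hE, hE, hE, hE]; congr 1; linear_combination ((1 : ℂ) * η ^ 16 + (2 : ℂ) * η ^ 14 + (2 : ℂ) * η ^ 12 + (1 : ℂ) * η ^ 10 + (1 : ℂ) * η ^ 8 + (-2 : ℂ) * η ^ 4 + (-2 : ℂ) * η ^ 2) * hPhi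
  have P9 : E (η ^ 16) * E (η ^ 8) * E (η ^ 20) * E (η ^ 22) * E (η ^ 14) = E ((0 : ℂ) + (2 : ℂ) * η ^ 2 + (-2 : ℂ) * η ^ 4 + (0 : ℂ) * η ^ 6) := by
    rw [hE, hE, hE, hE]; congr 1; linear_combination ((1 : ℂ) * η ^ 14 + (2 : ℂ) * η ^ 12 + (1 : ℂ) * η ^ 10 + (1 : ℂ) * η ^ 8 + (2 : ℂ) * η ^ 6 + (-2 : ℂ) * η ^ 2) * hPhi
  have P10 : E (η ^ 16) * E (η ^ 8) * E (η ^ 20) * E (η ^ 12) * E (η ^ 24) = E ((0 : ℂ) + (0 : ℂ) * η ^ 2 + (0 : ℂ) * η ^ 4 + (0 : ℂ) * η ^ 6) := by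
    rw [hE, hE, hE, hE]; congr 1; linear_combination ((1 : ℂ) * η ^ 16 + (1 : ℂ) * η ^ 14 + (1 : ℂ) * η ^ 12 + (1 : ℂ) * η ^ 10 + (1 : ℂ) * η ^ 8) * hPhi
  have P11 : E (η ^ 16) * E (η ^ 8) * E (η ^ 20) * E (η ^ 12) * E (η ^ 14) = E ((0 : ℂ) + (0 : ℂ) * η ^ 2 + (-2 : ℂ) * η ^ 4 + (0 : ℂ) * η ^ 6) := by
    rw [hE, hE, hE, hE]; congr 1; linear_combination ((1 : ℂ) * η ^ 12 + (1 : ℂ) * η ^ 10 + (1 : ℂ) * η ^ 8 + (2 : ℂ) * η ^ 6 + (2 : ℂ) * η ^ 4) * hPhi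
  have P12 : E (η ^ 16) * E (η ^ 8) * E (η ^ 10) * E (η ^ 22) * E (η ^ 24) = E ((-2 : ℂ) + (2 : ℂ) * η ^ 2 + (0 : ℂ) * η ^ 4 + (0 : ℂ) * η ^ 6) := by
    rw [hE, hE, hE, hE]; congr 1; linear_combination ((1 : ℂ) * η ^ 16 + (2 : ℂ) * η ^ 14 + (1 : ℂ) * η ^ 12 + (1 : ℂ) * η ^ 8 + (-2 : ℂ) * η ^ 4 + (2 : ℂ)) * hPhi
  have P13 : E (η ^ 16) * E (η ^ 8) * E (η ^ 10) * E (η ^ 22) * E (η ^ 14) = E ((-2 : ℂ) + (2 : ℂ) * η ^ 2 + (-2 : ℂ) * η ^ 4 + (0 : ℂ) * η ^ 6) := by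
    rw [hE, hE, hE, hE]; congr 1; linear_combination ((1 : ℂ) * η ^ 14 + (1 : ℂ) * η ^ 12 + (1 : ℂ) * η ^ 8 + (2 : ℂ) * η ^ 6 + (2 : ℂ)) * hPhi
  have P14 : E (η ^ 16) * E (η ^ 8) * E (η ^ 10) * E (η ^ 12) * E (η ^ 24) = E ((-2 : ℂ) + (0 : ℂ) * η ^ 2 + (0 : ℂ) * η ^ 4 + (0 : ℂ) * η ^ 6) := by
    rw [hE, hE, hE, hE]; congr 1; linear_combination ((1 : ℂ) * η ^ 16 + (1 : ℂ) * η ^ 14 + (1 : ℂ) * η ^ 8 + (2 : ℂ) * η ^ 2 + (2 : ℂ)) * hPhi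
  have P15 : E (η ^ 16) * E (η ^ 8) * E (η ^ 10) * E (η ^ 12) * E (η ^ 14) = E ((-2 : ℂ) + (0 : ℂ) * η ^ 2 + (-2 : ℂ) * η ^ 4 + (0 : ℂ) * η ^ 6) := by
    rw [hE, hE, hE, hE]; congr 1; linear_combination ((1 : ℂ) * η ^ 8 + (2 : ℂ) * η ^ 6 + (2 : ℂ) * η ^ 4 + (2 : ℂ) * η ^ 2 + (2 : ℂ)) * hPhi
  have P16 : E (η ^ 6) * E (η ^ 18) * E (η ^ 20) * E (η ^ 22) * E (η ^ 24) = E ((2 : ℂ) + (0 : ℂ) * η ^ 2 + (2 : ℂ) * η ^ 4 + (0 : ℂ) * η ^ 6) := by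
    rw [hE, hE, hE, hE]; congr 1; linear_combination ((1 : ℂ) * η ^ 16 + (2 : ℂ) * η ^ 14 + (2 : ℂ) * η ^ 12 + (2 : ℂ) * η ^ 10 + (1 : ℂ) * η ^ 8 + (-1 : ℂ) * η ^ 6 + (-2 : ℂ) * η ^ 4 + (-2 : ℂ) * η ^ 2 + (-2 : ℂ)) * hPhi
  have P17 : E (η ^ 6) * E (η ^ 18) * E (η ^ 20) * E (η ^ 22) * E (η ^ 14) = E ((2 : ℂ) + (0 : ℂ) * η ^ 2 + (0 : ℂ) * η ^ 4 + (0 : ℂ) * η ^ 6) := by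
    rw [hE, hE, hE, hE]; congr 1; linear_combination ((1 : ℂ) * η ^ 14 + (2 : ℂ) * η ^ 12 + (2 : ℂ) * η ^ 10 + (1 : ℂ) * η ^ 8 + (1 : ℂ) * η ^ 6 + (-2 : ℂ) * η ^ 2 + (-2 : ℂ)) * hPhi
  have P18 : E (η ^ 6) * E (η ^ 18) * E (η ^ 20) * E (η ^ 12) * E (η ^ 24) = E ((2 : ℂ) + (-2 : ℂ) * η ^ 2 + (2 : ℂ) * η ^ 4 + (0 : ℂ) * η ^ 6) := by
    rw [hE, hE, hE, hE]; congr 1; linear_combination ((1 : ℂ) * η ^ 16 + (1 : ℂ) * η ^ 14 + (1 : ℂ) * η ^ 12 + (2 : ℂ) * η ^ 10 + (1 : ℂ) * η ^ 8 + (-1 : ℂ) * η ^ 6 + (-2 : ℂ)) * hPhi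
  have P19 : E (η ^ 6) * E (η ^ 18) * E (η ^ 20) * E (η ^ 12) * E (η ^ 14) = E ((2 : ℂ) + (-2 : ℂ) * η ^ 2 + (0 : ℂ) * η ^ 4 + (0 : ℂ) * η ^ 6) := by
    rw [hE, hE, hE, hE]; congr 1; linear_combination ((1 : ℂ) * η ^ 12 + (2 : ℂ) * η ^ 10 + (1 : ℂ) * η ^ 8 + (1 : ℂ) * η ^ 6 + (2 : ℂ) * η ^ 4 + (-2 : ℂ)) * hPhi
  have P20 : E (η ^ 6) * E (η ^ 18) * E (η ^ 10) * E (η ^ 22) * E (η ^ 24) = E ((0 : ℂ) + (0 : ℂ) * η ^ 2 + (2 : ℂ) * η ^ 4 + (0 : ℂ) * η ^ 6) := by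
    rw [hE, hE, hE, hE]; congr 1; linear_combination ((1 : ℂ) * η ^ 16 + (2 : ℂ) * η ^ 14 + (1 : ℂ) * η ^ 12 + (1 : ℂ) * η ^ 10 + (1 : ℂ) * η ^ 8 + (-1 : ℂ) * η ^ 6 + (-2 : ℂ) * η ^ 4) * hPhi
  have P21 : E (η ^ 6) * E (η ^ 18) * E (η ^ 10) * E (η ^ 22) * E (η ^ 14) = E ((0 : ℂ) + (0 : ℂ) * η ^ 2 + (0 : ℂ) * η ^ 4 + (0 : ℂ) * η ^ 6) := by
    rw [hE, hE, hE, hE]; congr 1; linear_combination ((1 : ℂ) * η ^ 14 + (1 : ℂ) * η ^ 12 + (1 : ℂ) * η ^ 10 + (1 : ℂ) * η ^ 8 + (1 : ℂ) * η ^ 6) * hPhi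
  have P22 : E (η ^ 6) * E (η ^ 18) * E (η ^ 10) * E (η ^ 12) * E (η ^ 24) = E ((0 : ℂ) + (-2 : ℂ) * η ^ 2 + (2 : ℂ) * η ^ 4 + (0 : ℂ) * η ^ 6) := by
    rw [hE, hE, hE, hE]; congr 1; linear_combination ((1 : ℂ) * η ^ 16 + (1 : ℂ) * η ^ 14 + (1 : ℂ) * η ^ 10 + (1 : ℂ) * η ^ 8 + (-1 : ℂ) * η ^ 6 + (2 : ℂ) * η ^ 2) * hPhi
  have P23 : E (η ^ 6) * E (η ^ 18) * E (η ^ 10) * E (η ^ 12) * E (η ^ 14) = E ((0 : ℂ) + (-2 : ℂ) * η ^ 2 + (0 : ℂ) * η ^ 4 + (0 : ℂ) * η ^ 6) := by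
    rw [hE, hE, hE, hE]; congr 1; linear_combination ((1 : ℂ) * η ^ 10 + (1 : ℂ) * η ^ 8 + (1 : ℂ) * η ^ 6 + (2 : ℂ) * η ^ 4 + (2 : ℂ) * η ^ 2) * hPhi
  have P24 : E (η ^ 6) * E (η ^ 8) * E (η ^ 20) * E (η ^ 22) * E (η ^ 24) = E ((0 : ℂ) + (2 : ℂ) * η ^ 2 + (0 : ℂ) * η ^ 4 + (2 : ℂ) * η ^ 6) := by
    rw [hE, hE, hE, hE]; congr 1; linear_combination ((1 : ℂ) * η ^ 16 + (2 : ℂ) * η ^ 14 + (2 : ℂ) * η ^ 12 + (1 : ℂ) * η ^ 10 + (-1 : ℂ) * η ^ 6 + (-2 : ℂ) * η ^ 4 + (-2 : ℂ) * η ^ 2) * hPhi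
  have P25 : E (η ^ 6) * E (η ^ 8) * E (η ^ 20) * E (η ^ 22) * E (η ^ 14) = E ((0 : ℂ) + (2 : ℂ) * η ^ 2 + (-2 : ℂ) * η ^ 4 + (2 : ℂ) * η ^ 6) := by
    rw [hE, hE, hE, hE]; congr 1; linear_combination ((1 : ℂ) * η ^ 14 + (2 : ℂ) * η ^ 12 + (1 : ℂ) * η ^ 10 + (1 : ℂ) * η ^ 6 + (-2 : ℂ) * η ^ 2) * hPhi
  have P26 : E (η ^ 6) * E (η ^ 8) * E (η ^ 20) * E (η ^ 12) * E (η ^ 24) = E ((0 : ℂ) + (0 : ℂ) * η ^ 2 + (0 : ℂ) * η ^ 4 + (2 : ℂ) * η ^ 6) := by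
    rw [hE, hE, hE, hE]; congr 1; linear_combination ((1 : ℂ) * η ^ 16 + (1 : ℂ) * η ^ 14 + (1 : ℂ) * η ^ 12 + (1 : ℂ) * η ^ 10 + (-1 : ℂ) * η ^ 6) * hPhi
  have P27 : E (η ^ 6) * E (η ^ 8) * E (η ^ 20) * E (η ^ 12) * E (η ^ 14) = E ((0 : ℂ) + (0 : ℂ) * η ^ 2 + (-2 : ℂ) * η ^ 4 + (2 : ℂ) * η ^ 6) := by
    rw [hE, hE, hE, hE]; congr 1; linear_combination ((1 : ℂ) * η ^ 12 + (1 : ℂ) * η ^ 10 + (1 : ℂ) * η ^ 6 + (2 : ℂ) * η ^ 4) * hPhi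
  have P28 : E (η ^ 6) * E (η ^ 8) * E (η ^ 10) * E (η ^ 22) * E (η ^ 24) = E ((-2 : ℂ) + (2 : ℂ) * η ^ 2 + (0 : ℂ) * η ^ 4 + (2 : ℂ) * η ^ 6) := by
    rw [hE, hE, hE, hE]; congr 1; linear_combination ((1 : ℂ) * η ^ 16 + (2 : ℂ) * η ^ 14 + (1 : ℂ) * η ^ 12 + (-1 : ℂ) * η ^ 6 + (-2 : ℂ) * η ^ 4 + (2 : ℂ)) * hPhi
  have P29 : E (η ^ 6) * E (η ^ 8) * E (η ^ 10) * E (η ^ 22) * E (η ^ 14) = E ((-2 : ℂ) + (2 : ℂ) * η ^ 2 + (-2 : ℂ) * η ^ 4 + (2 : ℂ) * η ^ 6) := by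
    rw [hE, hE, hE, hE]; congr 1; linear_combination ((1 : ℂ) * η ^ 14 + (1 : ℂ) * η ^ 12 + (1 : ℂ) * η ^ 6 + (2 : ℂ)) * hPhi
  have P30 : E (η ^ 6) * E (η ^ 8) * E (η ^ 10) * E (η ^ 12) * E (η ^ 24) = E ((-2 : ℂ) + (0 : ℂ) * η ^ 2 + (0 : ℂ) * η ^ 4 + (2 : ℂ) * η ^ 6) := by
    rw [hE, hE, hE, hE]; congr 1; linear_combination ((1 : ℂ) * η ^ 16 + (1 : ℂ) * η ^ 14 + (-1 : ℂ) * η ^ 6 + (2 : ℂ) * η ^ 2 + (2 : ℂ)) * hPhi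
  have P31 : E (η ^ 6) * E (η ^ 8) * E (η ^ 10) * E (η ^ 12) * E (η ^ 14) = E ((-2 : ℂ) + (0 : ℂ) * η ^ 2 + (-2 : ℂ) * η ^ 4 + (2 : ℂ) * η ^ 6) := by
    rw [hE, hE, hE, hE]; congr 1; linear_combination ((1 : ℂ) * η ^ 6 + (2 : ℂ) * η ^ 4 + (2 : ℂ) * η ^ 2 + (2 : ℂ)) * hPhi
  have Q0 : E ((2 : ℂ) * η ^ 0) = E ((2 : ℂ) + (0 : ℂ) * η ^ 2 + (0 : ℂ) * η ^ 4 + (0 : ℂ) * η ^ 6) := by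
    congr 1; linear_combination (0 : ℂ) * hPhi
  have Q1 : E ((2 : ℂ) * η ^ 4 + (2 : ℂ) * η ^ 16) = E ((0 : ℂ) + (0 : ℂ) * η ^ 2 + (2 : ℂ) * η ^ 4 + (-2 : ℂ) * η ^ 6) := by
    congr 1; linear_combination ((2 : ℂ) * η ^ 8 + (2 : ℂ) * η ^ 6) * hPhi
  have Q2 : E ((2 : ℂ) * η ^ 8 + (2 : ℂ) * η ^ 12) = E ((-2 : ℂ) + (0 : ℂ) * η ^ 2 + (-2 : ℂ) * η ^ 4 + (2 : ℂ) * η ^ 6) := by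
    congr 1; linear_combination ((2 : ℂ) * η ^ 4 + (2 : ℂ) * η ^ 2 + (2 : ℂ)) * hPhi
  have Q3 : E ((2 : ℂ) * η ^ 2) = E ((0 : ℂ) + (2 : ℂ) * η ^ 2 + (0 : ℂ) * η ^ 4 + (0 : ℂ) * η ^ 6) := by
    congr 1; linear_combination (0 : ℂ) * hPhi
  have Q4 : E ((2 : ℂ) * η ^ 6 + (2 : ℂ) * η ^ 18) = E ((2 : ℂ) + (-2 : ℂ) * η ^ 2 + (2 : ℂ) * η ^ 4 + (0 : ℂ) * η ^ 6) := by
    congr 1; linear_combination ((2 : ℂ) * η ^ 10 + (2 : ℂ) * η ^ 8 + (-2 : ℂ)) * hPhi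
  have Q5 : E ((2 : ℂ) * η ^ 10 + (2 : ℂ) * η ^ 14) = E ((-2 : ℂ) + (0 : ℂ) * η ^ 2 + (-2 : ℂ) * η ^ 4 + (0 : ℂ) * η ^ 6) := by
    congr 1; linear_combination ((2 : ℂ) * η ^ 6 + (2 : ℂ) * η ^ 4 + (2 : ℂ) * η ^ 2 + (2 : ℂ)) * hPhi
  have Q6 : E ((2 : ℂ) * η ^ 4) = E ((0 : ℂ) + (0 : ℂ) * η ^ 2 + (2 : ℂ) * η ^ 4 + (0 : ℂ) * η ^ 6) := by
    congr 1; linear_combination (0 : ℂ) * hPhi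
  have Q7 : E ((2 : ℂ) * η ^ 8 + (2 : ℂ) * η ^ 20) = E ((0 : ℂ) + (2 : ℂ) * η ^ 2 + (-2 : ℂ) * η ^ 4 + (2 : ℂ) * η ^ 6) := by
    congr 1; linear_combination ((2 : ℂ) * η ^ 12 + (2 : ℂ) * η ^ 10 + (-2 : ℂ) * η ^ 2) * hPhi
  have Q8 : E ((2 : ℂ) * η ^ 12 + (2 : ℂ) * η ^ 16) = E ((0 : ℂ) + (-2 : ℂ) * η ^ 2 + (0 : ℂ) * η ^ 4 + (-2 : ℂ) * η ^ 6) := by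
    congr 1; linear_combination ((2 : ℂ) * η ^ 8 + (2 : ℂ) * η ^ 6 + (2 : ℂ) * η ^ 4 + (2 : ℂ) * η ^ 2) * hPhi
  have Q9 : E ((2 : ℂ) * η ^ 6) = E ((0 : ℂ) + (0 : ℂ) * η ^ 2 + (0 : ℂ) * η ^ 4 + (2 : ℂ) * η ^ 6) := by
    congr 1; linear_combination (0 : ℂ) * hPhi
  have Q10 : E ((2 : ℂ) * η ^ 10 + (2 : ℂ) * η ^ 22) = E ((-2 : ℂ) + (2 : ℂ) * η ^ 2 + (0 : ℂ) * η ^ 4 + (0 : ℂ) * η ^ 6) := by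
    congr 1; linear_combination ((2 : ℂ) * η ^ 14 + (2 : ℂ) * η ^ 12 + (-2 : ℂ) * η ^ 4 + (2 : ℂ)) * hPhi
  have Q11 : E ((2 : ℂ) * η ^ 14 + (2 : ℂ) * η ^ 18) = E ((2 : ℂ) + (-2 : ℂ) * η ^ 2 + (0 : ℂ) * η ^ 4 + (-2 : ℂ) * η ^ 6) := by
    congr 1; linear_combination ((2 : ℂ) * η ^ 10 + (2 : ℂ) * η ^ 8 + (2 : ℂ) * η ^ 6 + (2 : ℂ) * η ^ 4 + (-2 : ℂ)) * hPhi
  have Q12 : E ((2 : ℂ) * η ^ 8) = E ((-2 : ℂ) + (2 : ℂ) * η ^ 2 + (-2 : ℂ) * η ^ 4 + (2 : ℂ) * η ^ 6) := by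
    congr 1; linear_combination ((2 : ℂ)) * hPhi
  have Q13 : E ((2 : ℂ) * η ^ 12 + (2 : ℂ) * η ^ 24) = E ((0 : ℂ) + (-2 : ℂ) * η ^ 2 + (2 : ℂ) * η ^ 4 + (0 : ℂ) * η ^ 6) := by
    congr 1; linear_combination ((2 : ℂ) * η ^ 16 + (2 : ℂ) * η ^ 14 + (-2 : ℂ) * η ^ 6 + (2 : ℂ) * η ^ 2) * hPhi
  have Q14 : E ((2 : ℂ) * η ^ 16 + (2 : ℂ) * η ^ 20) = E ((2 : ℂ) + (0 : ℂ) * η ^ 2 + (0 : ℂ) * η ^ 4 + (-2 : ℂ) * η ^ 6) := by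
    congr 1; linear_combination ((2 : ℂ) * η ^ 12 + (2 : ℂ) * η ^ 10 + (2 : ℂ) * η ^ 8 + (2 : ℂ) * η ^ 6 + (-2 : ℂ) * η ^ 2 + (-2 : ℂ)) * hPhi
  have Q15 : E ((2 : ℂ) * η ^ 10) = E ((-2 : ℂ) + (0 : ℂ) * η ^ 2 + (0 : ℂ) * η ^ 4 + (0 : ℂ) * η ^ 6) := by
    congr 1; linear_combination ((2 : ℂ) * η ^ 2 + (2 : ℂ)) * hPhi
  have Q16 : E ((2 : ℂ) * η ^ 14 + (2 : ℂ) * η ^ 26) = E ((0 : ℂ) + (0 : ℂ) * η ^ 2 + (-2 : ℂ) * η ^ 4 + (2 : ℂ) * η ^ 6) := by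
    congr 1; linear_combination ((2 : ℂ) * η ^ 18 + (2 : ℂ) * η ^ 16 + (-2 : ℂ) * η ^ 8 + (2 : ℂ) * η ^ 4) * hPhi
  have Q17 : E ((2 : ℂ) * η ^ 18 + (2 : ℂ) * η ^ 22) = E ((2 : ℂ) + (0 : ℂ) * η ^ 2 + (2 : ℂ) * η ^ 4 + (-2 : ℂ) * η ^ 6) := by
    congr 1; linear_combination ((2 : ℂ) * η ^ 14 + (2 : ℂ) * η ^ 12 + (2 : ℂ) * η ^ 10 + (2 : ℂ) * η ^ 8 + (-2 : ℂ) * η ^ 4 + (-2 : ℂ) * η ^ 2 + (-2 : ℂ)) * hPhi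
  have Q18 : E ((2 : ℂ) * η ^ 12) = E ((0 : ℂ) + (-2 : ℂ) * η ^ 2 + (0 : ℂ) * η ^ 4 + (0 : ℂ) * η ^ 6) := by
    congr 1; linear_combination ((2 : ℂ) * η ^ 4 + (2 : ℂ) * η ^ 2) * hPhi
  have Q19 : E ((2 : ℂ) * η ^ 16 + (2 : ℂ) * η ^ 28) = E ((-2 : ℂ) + (2 : ℂ) * η ^ 2 + (-2 : ℂ) * η ^ 4 + (0 : ℂ) * η ^ 6) := by
    congr 1; linear_combination ((2 : ℂ) * η ^ 20 + (2 : ℂ) * η ^ 18 + (-2 : ℂ) * η ^ 10 + (2 : ℂ) * η ^ 6 + (2 : ℂ)) * hPhi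
  have Q20 : E ((2 : ℂ) * η ^ 20 + (2 : ℂ) * η ^ 24) = E ((2 : ℂ) + (0 : ℂ) * η ^ 2 + (2 : ℂ) * η ^ 4 + (0 : ℂ) * η ^ 6) := by
    congr 1; linear_combination ((2 : ℂ) * η ^ 16 + (2 : ℂ) * η ^ 14 + (2 : ℂ) * η ^ 12 + (2 : ℂ) * η ^ 10 + (-2 : ℂ) * η ^ 6 + (-2 : ℂ) * η ^ 4 + (-2 : ℂ) * η ^ 2 + (-2 : ℂ)) * hPhi
  have Q21 : E ((2 : ℂ) * η ^ 14) = E ((0 : ℂ) + (0 : ℂ) * η ^ 2 + (-2 : ℂ) * η ^ 4 + (0 : ℂ) * η ^ 6) := by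
    congr 1; linear_combination ((2 : ℂ) * η ^ 6 + (2 : ℂ) * η ^ 4) * hPhi
  have Q22 : E ((2 : ℂ) * η ^ 18 + (2 : ℂ) * η ^ 30) = E ((0 : ℂ) + (-2 : ℂ) * η ^ 2 + (2 : ℂ) * η ^ 4 + (-2 : ℂ) * η ^ 6) := by
    congr 1; linear_combination ((2 : ℂ) * η ^ 22 + (2 : ℂ) * η ^ 20 + (-2 : ℂ) * η ^ 12 + (2 : ℂ) * η ^ 8 + (2 : ℂ) * η ^ 2) * hPhi
  have Q23 : E ((2 : ℂ) * η ^ 22 + (2 : ℂ) * η ^ 26) = E ((0 : ℂ) + (2 : ℂ) * η ^ 2 + (0 : ℂ) * η ^ 4 + (2 : ℂ) * η ^ 6) := by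
    congr 1; linear_combination ((2 : ℂ) * η ^ 18 + (2 : ℂ) * η ^ 16 + (2 : ℂ) * η ^ 14 + (2 : ℂ) * η ^ 12 + (-2 : ℂ) * η ^ 8 + (-2 : ℂ) * η ^ 6 + (-2 : ℂ) * η ^ 4 + (-2 : ℂ) * η ^ 2) * hPhi
  have Q24 : E ((2 : ℂ) * η ^ 16) = E ((0 : ℂ) + (0 : ℂ) * η ^ 2 + (0 : ℂ) * η ^ 4 + (-2 : ℂ) * η ^ 6) := by
    congr 1; linear_combination ((2 : ℂ) * η ^ 8 + (2 : ℂ) * η ^ 6) * hPhi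
  have Q25 : E ((2 : ℂ) * η ^ 20 + (2 : ℂ) * η ^ 32) = E ((2 : ℂ) + (-2 : ℂ) * η ^ 2 + (0 : ℂ) * η ^ 4 + (0 : ℂ) * η ^ 6) := by
    congr 1; linear_combination ((2 : ℂ) * η ^ 24 + (2 : ℂ) * η ^ 22 + (-2 : ℂ) * η ^ 14 + (2 : ℂ) * η ^ 10 + (2 : ℂ) * η ^ 4 + (-2 : ℂ)) * hPhi
  have Q26 : E ((2 : ℂ) * η ^ 24 + (2 : ℂ) * η ^ 28) = E ((-2 : ℂ) + (2 : ℂ) * η ^ 2 + (0 : ℂ) * η ^ 4 + (2 : ℂ) * η ^ 6) := by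
    congr 1; linear_combination ((2 : ℂ) * η ^ 20 + (2 : ℂ) * η ^ 18 + (2 : ℂ) * η ^ 16 + (2 : ℂ) * η ^ 14 + (-2 : ℂ) * η ^ 10 + (-2 : ℂ) * η ^ 8 + (-2 : ℂ) * η ^ 6 + (-2 : ℂ) * η ^ 4 + (2 : ℂ)) * hPhi
  have Q27 : E ((2 : ℂ) * η ^ 18) = E ((2 : ℂ) + (-2 : ℂ) * η ^ 2 + (2 : ℂ) * η ^ 4 + (-2 : ℂ) * η ^ 6) := by
    congr 1; linear_combination ((2 : ℂ) * η ^ 10 + (2 : ℂ) * η ^ 8 + (-2 : ℂ)) * hPhi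
  have Q28 : E ((2 : ℂ) * η ^ 22 + (2 : ℂ) * η ^ 34) = E ((0 : ℂ) + (2 : ℂ) * η ^ 2 + (-2 : ℂ) * η ^ 4 + (0 : ℂ) * η ^ 6) := by
    congr 1; linear_combination ((2 : ℂ) * η ^ 26 + (2 : ℂ) * η ^ 24 + (-2 : ℂ) * η ^ 16 + (2 : ℂ) * η ^ 12 + (2 : ℂ) * η ^ 6 + (-2 : ℂ) * η ^ 2) * hPhi
  have Q29 : E ((2 : ℂ) * η ^ 26 + (2 : ℂ) * η ^ 30) = E ((-2 : ℂ) + (0 : ℂ) * η ^ 2 + (0 : ℂ) * η ^ 4 + (2 : ℂ) * η ^ 6) := by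
    congr 1; linear_combination ((2 : ℂ) * η ^ 22 + (2 : ℂ) * η ^ 20 + (2 : ℂ) * η ^ 18 + (2 : ℂ) * η ^ 16 + (-2 : ℂ) * η ^ 12 + (-2 : ℂ) * η ^ 10 + (-2 : ℂ) * η ^ 8 + (-2 : ℂ) * η ^ 6 + (2 : ℂ) * η ^ 2 + (2 : ℂ)) * hPhi
  linear_combination P0 - P1 - P2 + P3 - P4 + P5 + P6 - P7 - P8 + P9 + P10 - P11 + P12 - P13 - P14 + P15 - P16 + P17 + P18 - P19 + P20 - P21 - P22 + P23 + P24 - P25 - P26 + P27 - P28 + P29 + P30 - P31 - Q0 + Q1 + Q2 + Q3 - Q4 - Q5 - Q6 + Q7 + Q8 + Q9 - Q10 - Q11 - Q12 + Q13 + Q14 + Q15 - Q16 - Q17 - Q18 + Q19 + Q20 + Q21 - Q22 - Q23 - Q24 + Q25 + Q26 + Q27 - Q28 - Q29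


open Real Complex in
noncomputable def ηc : ℂ := Complex.exp ((π/10 : ℝ) * Complex.I)

open Real Complex Finset

lemma etac_pow (k : ℕ) : ηc ^ k = Complex.exp ((k * (π/10) : ℝ) * Complex.I) := by
  rw [ηc, ← Complex.exp_nat_mul]; congr 1; push_cast; ring

lemma etac_pow_im (k : ℕ) : (ηc ^ k).im = Real.sin (k * (π/10)) := by
  rw [etac_pow, Complex.exp_ofReal_mul_I_im]

lemma etac_20 : ηc ^ 20 = 1 := by
  rw [etac_pow]
  have : ((20 : ℕ) * (π/10) : ℝ) = 2 * π := by push_cast; ring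
  rw [this]; exact_mod_cast Complex.exp_two_pi_mul_I

lemma etac_10 : ηc ^ 10 = -1 := by
  rw [etac_pow]
  have : ((10 : ℕ) * (π/10) : ℝ) = π := by push_cast; ring
  rw [this]; exact_mod_cast Complex.exp_pi_mul_I

lemma etac_5 : ηc ^ 5 = Complex.I := by
  rw [etac_pow]
  have : ((5 : ℕ) * (π/10) : ℝ) = π/2 := by push_cast; ring
  rw [this, Complex.exp_mul_I]
  push_cast [Complex.ofReal_cos, Complex.ofReal_sin]
  simp

lemma etac_sq_ne : ηc ^ 2 + 1 ≠ 0 := by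
  intro h
  have him : (ηc ^ 2).im = Real.sin (2 * (π/10)) := etac_pow_im 2
  have hpos : 0 < Real.sin (2 * (π/10)) := by
    apply Real.sin_pos_of_pos_of_lt_pi <;> nlinarith [Real.pi_pos]
  have : (ηc ^ 2).im = 0 := by
    have := congrArg Complex.im h; simpa using this
  rw [him] at this; linarith

lemma etac_phi : ηc ^ 8 - ηc ^ 6 + ηc ^ 4 - ηc ^ 2 + 1 = 0 := by
  have h : (ηc ^ 2 + 1) * (ηc ^ 8 - ηc ^ 6 + ηc ^ 4 - ηc ^ 2 + 1) = 0 := by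
    have := etac_10; linear_combination this
  rcases mul_eq_zero.1 h with h' | h'
  · exact absurd h' etac_sq_ne
  · exact h'

lemma etac_two_mul_eq_neg_one {r : ℕ} (hr : r < 10) : ηc ^ (2 * r) = -1 ↔ r = 5 := by
  constructor
  · intro h
    by_contra hne
    have him : (ηc ^ (2*r)).im = Real.sin ((2*r : ℕ) * (π/10)) := etac_pow_im _
    have h0 : Real.sin ((2*r : ℕ) * (π/10)) = 0 := by
      rw [← him, h]; simp
    rw [Real.sin_eq_zero_iff] at h0
    obtain ⟨n, hn⟩ := h0
    have hpi := Real.pi_ne_zero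
    have h5 : (5 : ℝ) * n = r := by
      have h' : (n : ℝ) * π * 5 = ((2*r : ℕ) : ℝ) * (π/10) * 5 := by rw [hn]
      push_cast at h'
      nlinarith [Real.pi_pos]
    have h5' : (5:ℤ) * n = (r:ℤ) := by exact_mod_cast h5
    have hr0 : r = 0 := by omega
    rw [hr0] at h
    norm_num at h
  · rintro rfl; simpa using etac_10


open Real Complex Finset

lemma hasSum_cexp (x : ℂ) : HasSum (fun m : ℕ => x ^ m / m.factorial) (Complex.exp x) := by
  have h := (NormedSpace.expSeries_div_summable x).hasSum
  rw [Complex.exp_eq_exp_ℂ, NormedSpace.exp_eq_tsum_div]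
  exact h

lemma etac_root_iff (m : ℕ) : ηc ^ (2 * m) = -1 ↔ m % 10 = 5 := by
  have hsplit : ηc ^ (2 * m) = ηc ^ (2 * (m % 10)) := by
    have he : 2 * m = 20 * (m / 10) + 2 * (m % 10) := by omega
    rw [he, pow_add, pow_mul, etac_20, one_pow, one_mul]
  rw [hsplit]
  exact etac_two_mul_eq_neg_one (Nat.mod_lt _ (by norm_num))

lemma hasSum_residue (x : ℂ) :
    HasSum (fun n : ℕ => x ^ (10*n+5) / (10*n+5).factorial)
      ((1/10) * ∑ k ∈ Finset.range 10, (-1:ℂ)^k * Complex.exp (ηc ^ (2*k) * x)) := by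
  have H : HasSum (fun m : ℕ => ∑ k ∈ Finset.range 10, ((-1:ℂ)^k/10) * ((ηc ^ (2*k) * x) ^ m / m.factorial))
      (∑ k ∈ Finset.range 10, ((-1:ℂ)^k/10) * Complex.exp (ηc ^ (2*k) * x)) := by
    refine hasSum_sum ?_
    intro k _
    exact (hasSum_cexp _).mul_left _
  have hfun : ∀ m : ℕ, ∑ k ∈ Finset.range 10, ((-1:ℂ)^k/10) * ((ηc ^ (2*k) * x) ^ m / m.factorial)
      = if m % 10 = 5 then x ^ m / m.factorial else 0 := by
    intro m
    have step : ∀ k : ℕ, ((-1:ℂ)^k/10) * ((ηc ^ (2*k) * x) ^ m / m.factorial)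
        = (-ηc ^ (2*m)) ^ k * (x ^ m / m.factorial / 10) := by
      intro k
      have hp : (ηc ^ (2*k)) ^ m = (ηc ^ (2*m)) ^ k := by
        rw [← pow_mul, ← pow_mul]; congr 1; ring
      rw [mul_pow, hp, neg_pow]
      ring
    rw [Finset.sum_congr rfl (fun k _ => step k), ← Finset.sum_mul]
    by_cases hm : m % 10 = 5
    · have hr : ηc ^ (2*m) = -1 := (etac_root_iff m).2 hm
      rw [hr, if_pos hm]
      norm_num
      ring
    · have hne : -ηc ^ (2*m) ≠ 1 := by
        intro h
        have : ηc ^ (2*m) = -1 := by linear_combination -h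
        exact hm ((etac_root_iff m).1 this)
      rw [geom_sum_eq hne, if_neg hm]
      have h10 : (-ηc ^ (2*m)) ^ 10 = 1 := by
        have hp2 : (ηc ^ (2*m)) ^ 10 = (ηc ^ 20) ^ m := by
          rw [← pow_mul, ← pow_mul]; congr 1; ring
        rw [neg_pow, hp2, etac_20, one_pow]
        norm_num
      rw [h10]
      simp
  rw [funext hfun] at H
  have hinj : Function.Injective (fun n : ℕ => 10*n+5) := by
    intro a b h
    have h' : 10*a+5 = 10*b+5 := h
    omega
  have h0 : ∀ m, m ∉ Set.range (fun n : ℕ => 10*n+5) → (if m % 10 = 5 then x ^ m / (m.factorial:ℂ) else 0) = 0 := by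
    intro m hm
    rw [if_neg]
    intro h5
    exact hm ⟨m / 10, by show 10 * (m / 10) + 5 = m; omega⟩
  have H2 : HasSum (fun n : ℕ => if (10*n+5) % 10 = 5 then x ^ (10*n+5) / ((10*n+5).factorial:ℂ) else 0)
      (∑ k ∈ Finset.range 10, ((-1:ℂ)^k/10) * Complex.exp (ηc ^ (2*k) * x)) :=
    (Function.Injective.hasSum_iff hinj h0).2 H
  have hfun2 : (fun n : ℕ => if (10*n+5) % 10 = 5 then x ^ (10*n+5) / ((10*n+5).factorial:ℂ) else 0)
      = fun n : ℕ => x ^ (10*n+5) / (10*n+5).factorial := by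
    funext n
    rw [if_pos (by omega)]
  rw [hfun2] at H2
  have hval : ((1:ℂ)/10) * ∑ k ∈ Finset.range 10, (-1:ℂ)^k * Complex.exp (ηc ^ (2*k) * x)
      = ∑ k ∈ Finset.range 10, ((-1:ℂ)^k/10) * Complex.exp (ηc ^ (2*k) * x) := by
    rw [Finset.mul_sum]; exact Finset.sum_congr rfl fun k _ => by ring
  rw [show (1/10 : ℂ) = ((1:ℂ)/10) from rfl, hval]
  exact H2


set_option maxHeartbeats 1000000 in
lemma sin_prod_eq (z : ℂ) :
    ∏ j ∈ Finset.range 5, Complex.sin ((π:ℂ) * ηc ^ (2*j+1) * z) =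
      Complex.I / 32 * ∑ k ∈ Finset.range 10, (-1 : ℂ)^k *
        (Complex.exp (2*(π:ℂ)*z*ηc^(2*k)) - Complex.exp (2*(π:ℂ)*z*((ηc^4+ηc^16)*ηc^(2*k)))
          - Complex.exp (2*(π:ℂ)*z*((ηc^8+ηc^12)*ηc^(2*k)))) := by
  have hI5 : Complex.I = ηc ^ 5 := etac_5.symm
  have h10 : ηc ^ 10 = -1 := etac_10
  have hE : ∀ c d : ℂ, Complex.exp ((π:ℂ) * z * c) * Complex.exp ((π:ℂ) * z * d) = Complex.exp ((π:ℂ) * z * (c + d)) := by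
    intro c d; rw [← Complex.exp_add]; ring_nf
  have key := key_expand (fun c : ℂ => Complex.exp ((π:ℂ) * z * c)) ηc (fun c d => hE c d) etac_phi
  have hs0 : Complex.sin ((π:ℂ) * ηc ^ (2*0+1) * z) = (Complex.exp ((π:ℂ) * z * ηc ^ 16) - Complex.exp ((π:ℂ) * z * ηc ^ 6)) * Complex.I / 2 := by
    have e1 : -((π:ℂ) * ηc ^ (2*0+1) * z) * Complex.I = (π:ℂ) * z * ηc ^ 16 := by
      linear_combination (-((π:ℂ) * z * ηc ^ 1)) * hI5 + (-((π:ℂ) * z * ηc ^ 6)) * h10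
    have e2 : ((π:ℂ) * ηc ^ (2*0+1) * z) * Complex.I = (π:ℂ) * z * ηc ^ 6 := by
      linear_combination ((π:ℂ) * z * ηc ^ 1) * hI5
    rw [Complex.sin, e1, e2]
  have hs1 : Complex.sin ((π:ℂ) * ηc ^ (2*1+1) * z) = (Complex.exp ((π:ℂ) * z * ηc ^ 18) - Complex.exp ((π:ℂ) * z * ηc ^ 8)) * Complex.I / 2 := by
    have e1 : -((π:ℂ) * ηc ^ (2*1+1) * z) * Complex.I = (π:ℂ) * z * ηc ^ 18 := by
      linear_combination (-((π:ℂ) * z * ηc ^ 3)) * hI5 + (-((π:ℂ) * z * ηc ^ 8)) * h10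
    have e2 : ((π:ℂ) * ηc ^ (2*1+1) * z) * Complex.I = (π:ℂ) * z * ηc ^ 8 := by
      linear_combination ((π:ℂ) * z * ηc ^ 3) * hI5
    rw [Complex.sin, e1, e2]
  have hs2 : Complex.sin ((π:ℂ) * ηc ^ (2*2+1) * z) = (Complex.exp ((π:ℂ) * z * ηc ^ 20) - Complex.exp ((π:ℂ) * z * ηc ^ 10)) * Complex.I / 2 := by
    have e1 : -((π:ℂ) * ηc ^ (2*2+1) * z) * Complex.I = (π:ℂ) * z * ηc ^ 20 := by
      linear_combination (-((π:ℂ) * z * ηc ^ 5)) * hI5 + (-((π:ℂ) * z * ηc ^ 10)) * h10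
    have e2 : ((π:ℂ) * ηc ^ (2*2+1) * z) * Complex.I = (π:ℂ) * z * ηc ^ 10 := by
      linear_combination ((π:ℂ) * z * ηc ^ 5) * hI5
    rw [Complex.sin, e1, e2]
  have hs3 : Complex.sin ((π:ℂ) * ηc ^ (2*3+1) * z) = (Complex.exp ((π:ℂ) * z * ηc ^ 22) - Complex.exp ((π:ℂ) * z * ηc ^ 12)) * Complex.I / 2 := by
    have e1 : -((π:ℂ) * ηc ^ (2*3+1) * z) * Complex.I = (π:ℂ) * z * ηc ^ 22 := by
      linear_combination (-((π:ℂ) * z * ηc ^ 7)) * hI5 + (-((π:ℂ) * z * ηc ^ 12)) * h10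
    have e2 : ((π:ℂ) * ηc ^ (2*3+1) * z) * Complex.I = (π:ℂ) * z * ηc ^ 12 := by
      linear_combination ((π:ℂ) * z * ηc ^ 7) * hI5
    rw [Complex.sin, e1, e2]
  have hs4 : Complex.sin ((π:ℂ) * ηc ^ (2*4+1) * z) = (Complex.exp ((π:ℂ) * z * ηc ^ 24) - Complex.exp ((π:ℂ) * z * ηc ^ 14)) * Complex.I / 2 := by
    have e1 : -((π:ℂ) * ηc ^ (2*4+1) * z) * Complex.I = (π:ℂ) * z * ηc ^ 24 := by
      linear_combination (-((π:ℂ) * z * ηc ^ 9)) * hI5 + (-((π:ℂ) * z * ηc ^ 14)) * h10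
    have e2 : ((π:ℂ) * ηc ^ (2*4+1) * z) * Complex.I = (π:ℂ) * z * ηc ^ 14 := by
      linear_combination ((π:ℂ) * z * ηc ^ 9) * hI5
    rw [Complex.sin, e1, e2]
  have hcollapse : ∀ a1 a2 a3 a4 a5 : ℂ, a1 * Complex.I / 2 * (a2 * Complex.I / 2) * (a3 * Complex.I / 2) * (a4 * Complex.I / 2) * (a5 * Complex.I / 2) = Complex.I / 32 * (a1 * a2 * a3 * a4 * a5) := by
    intro a1 a2 a3 a4 a5
    linear_combination ((Complex.I^3 - Complex.I) * (a1*a2*a3*a4*a5)/32) * Complex.I_sq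
  have he0 : Complex.exp (2*(π:ℂ)*z*ηc^(2*0)) = Complex.exp ((π:ℂ) * z * ((2 : ℂ) * ηc ^ 0)) := by congr 1; ring
  have he1 : Complex.exp (2*(π:ℂ)*z*((ηc^4+ηc^16)*ηc^(2*0))) = Complex.exp ((π:ℂ) * z * ((2 : ℂ) * ηc ^ 4 + (2 : ℂ) * ηc ^ 16)) := by congr 1; ring
  have he2 : Complex.exp (2*(π:ℂ)*z*((ηc^8+ηc^12)*ηc^(2*0))) = Complex.exp ((π:ℂ) * z * ((2 : ℂ) * ηc ^ 8 + (2 : ℂ) * ηc ^ 12)) := by congr 1; ring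
  have he3 : Complex.exp (2*(π:ℂ)*z*ηc^(2*1)) = Complex.exp ((π:ℂ) * z * ((2 : ℂ) * ηc ^ 2)) := by congr 1; ring
  have he4 : Complex.exp (2*(π:ℂ)*z*((ηc^4+ηc^16)*ηc^(2*1))) = Complex.exp ((π:ℂ) * z * ((2 : ℂ) * ηc ^ 6 + (2 : ℂ) * ηc ^ 18)) := by congr 1; ring
  have he5 : Complex.exp (2*(π:ℂ)*z*((ηc^8+ηc^12)*ηc^(2*1))) = Complex.exp ((π:ℂ) * z * ((2 : ℂ) * ηc ^ 10 + (2 : ℂ) * ηc ^ 14)) := by congr 1; ring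
  have he6 : Complex.exp (2*(π:ℂ)*z*ηc^(2*2)) = Complex.exp ((π:ℂ) * z * ((2 : ℂ) * ηc ^ 4)) := by congr 1; ring
  have he7 : Complex.exp (2*(π:ℂ)*z*((ηc^4+ηc^16)*ηc^(2*2))) = Complex.exp ((π:ℂ) * z * ((2 : ℂ) * ηc ^ 8 + (2 : ℂ) * ηc ^ 20)) := by congr 1; ring
  have he8 : Complex.exp (2*(π:ℂ)*z*((ηc^8+ηc^12)*ηc^(2*2))) = Complex.exp ((π:ℂ) * z * ((2 : ℂ) * ηc ^ 12 + (2 : ℂ) * ηc ^ 16)) := by congr 1; ring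
  have he9 : Complex.exp (2*(π:ℂ)*z*ηc^(2*3)) = Complex.exp ((π:ℂ) * z * ((2 : ℂ) * ηc ^ 6)) := by congr 1; ring
  have he10 : Complex.exp (2*(π:ℂ)*z*((ηc^4+ηc^16)*ηc^(2*3))) = Complex.exp ((π:ℂ) * z * ((2 : ℂ) * ηc ^ 10 + (2 : ℂ) * ηc ^ 22)) := by congr 1; ring
  have he11 : Complex.exp (2*(π:ℂ)*z*((ηc^8+ηc^12)*ηc^(2*3))) = Complex.exp ((π:ℂ) * z * ((2 : ℂ) * ηc ^ 14 + (2 : ℂ) * ηc ^ 18)) := by congr 1; ring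
  have he12 : Complex.exp (2*(π:ℂ)*z*ηc^(2*4)) = Complex.exp ((π:ℂ) * z * ((2 : ℂ) * ηc ^ 8)) := by congr 1; ring
  have he13 : Complex.exp (2*(π:ℂ)*z*((ηc^4+ηc^16)*ηc^(2*4))) = Complex.exp ((π:ℂ) * z * ((2 : ℂ) * ηc ^ 12 + (2 : ℂ) * ηc ^ 24)) := by congr 1; ring
  have he14 : Complex.exp (2*(π:ℂ)*z*((ηc^8+ηc^12)*ηc^(2*4))) = Complex.exp ((π:ℂ) * z * ((2 : ℂ) * ηc ^ 16 + (2 : ℂ) * ηc ^ 20)) := by congr 1; ring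
  have he15 : Complex.exp (2*(π:ℂ)*z*ηc^(2*5)) = Complex.exp ((π:ℂ) * z * ((2 : ℂ) * ηc ^ 10)) := by congr 1; ring
  have he16 : Complex.exp (2*(π:ℂ)*z*((ηc^4+ηc^16)*ηc^(2*5))) = Complex.exp ((π:ℂ) * z * ((2 : ℂ) * ηc ^ 14 + (2 : ℂ) * ηc ^ 26)) := by congr 1; ring
  have he17 : Complex.exp (2*(π:ℂ)*z*((ηc^8+ηc^12)*ηc^(2*5))) = Complex.exp ((π:ℂ) * z * ((2 : ℂ) * ηc ^ 18 + (2 : ℂ) * ηc ^ 22)) := by congr 1; ring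
  have he18 : Complex.exp (2*(π:ℂ)*z*ηc^(2*6)) = Complex.exp ((π:ℂ) * z * ((2 : ℂ) * ηc ^ 12)) := by congr 1; ring
  have he19 : Complex.exp (2*(π:ℂ)*z*((ηc^4+ηc^16)*ηc^(2*6))) = Complex.exp ((π:ℂ) * z * ((2 : ℂ) * ηc ^ 16 + (2 : ℂ) * ηc ^ 28)) := by congr 1; ring
  have he20 : Complex.exp (2*(π:ℂ)*z*((ηc^8+ηc^12)*ηc^(2*6))) = Complex.exp ((π:ℂ) * z * ((2 : ℂ) * ηc ^ 20 + (2 : ℂ) * ηc ^ 24)) := by congr 1; ring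
  have he21 : Complex.exp (2*(π:ℂ)*z*ηc^(2*7)) = Complex.exp ((π:ℂ) * z * ((2 : ℂ) * ηc ^ 14)) := by congr 1; ring
  have he22 : Complex.exp (2*(π:ℂ)*z*((ηc^4+ηc^16)*ηc^(2*7))) = Complex.exp ((π:ℂ) * z * ((2 : ℂ) * ηc ^ 18 + (2 : ℂ) * ηc ^ 30)) := by congr 1; ring
  have he23 : Complex.exp (2*(π:ℂ)*z*((ηc^8+ηc^12)*ηc^(2*7))) = Complex.exp ((π:ℂ) * z * ((2 : ℂ) * ηc ^ 22 + (2 : ℂ) * ηc ^ 26)) := by congr 1; ring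
  have he24 : Complex.exp (2*(π:ℂ)*z*ηc^(2*8)) = Complex.exp ((π:ℂ) * z * ((2 : ℂ) * ηc ^ 16)) := by congr 1; ring
  have he25 : Complex.exp (2*(π:ℂ)*z*((ηc^4+ηc^16)*ηc^(2*8))) = Complex.exp ((π:ℂ) * z * ((2 : ℂ) * ηc ^ 20 + (2 : ℂ) * ηc ^ 32)) := by congr 1; ring
  have he26 : Complex.exp (2*(π:ℂ)*z*((ηc^8+ηc^12)*ηc^(2*8))) = Complex.exp ((π:ℂ) * z * ((2 : ℂ) * ηc ^ 24 + (2 : ℂ) * ηc ^ 28)) := by congr 1; ring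
  have he27 : Complex.exp (2*(π:ℂ)*z*ηc^(2*9)) = Complex.exp ((π:ℂ) * z * ((2 : ℂ) * ηc ^ 18)) := by congr 1; ring
  have he28 : Complex.exp (2*(π:ℂ)*z*((ηc^4+ηc^16)*ηc^(2*9))) = Complex.exp ((π:ℂ) * z * ((2 : ℂ) * ηc ^ 22 + (2 : ℂ) * ηc ^ 34)) := by congr 1; ring
  have he29 : Complex.exp (2*(π:ℂ)*z*((ηc^8+ηc^12)*ηc^(2*9))) = Complex.exp ((π:ℂ) * z * ((2 : ℂ) * ηc ^ 26 + (2 : ℂ) * ηc ^ 30)) := by congr 1; ring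
  rw [Finset.prod_range_succ, Finset.prod_range_succ, Finset.prod_range_succ, Finset.prod_range_succ, Finset.prod_range_one,
    Finset.sum_range_succ, Finset.sum_range_succ, Finset.sum_range_succ, Finset.sum_range_succ, Finset.sum_range_succ,
    Finset.sum_range_succ, Finset.sum_range_succ, Finset.sum_range_succ, Finset.sum_range_succ, Finset.sum_range_one]
  rw [hs0, hs1, hs2, hs3, hs4, hcollapse, key]
  linear_combination (Complex.I/32) * (0 - he0 + he1 + he2 + he3 - he4 - he5 - he6 + he7 + he8 + he9 - he10 - he11 - he12 + he13 + he14 + he15 - he16 - he17 - he18 + he19 + he20 + he21 - he22 - he23 - he24 + he25 + he26 + he27 - he28 - he29)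


open Real Complex Finset

private lemma hasSum_ext {f g : ℕ → ℂ} {a b : ℂ} (h : ∀ n, f n = g n) (hab : a = b)
    (hf : HasSum f a) : HasSum g b := by
  rw [show g = f from funext fun n => (h n).symm, ← hab]; exact hf

private lemma coef_id (A B C zz F : ℂ) (n : ℕ) (hv : C * zz ≠ 0) (hF : F ≠ 0) :
    10 / (C*zz)^5 * ((C*zz)^(10*n+5)/F - (A*(C*zz))^(10*n+5)/F - (B*(C*zz))^(10*n+5)/F)
      = 10 * C^(10*n) / F * (1 - A^(10*n+5) - B^(10*n+5)) * zz^(10*n) := by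
  have h1 : (C*zz)^(10*n+5) = C^(10*n)*zz^(10*n)*(C*zz)^5 := by
    rw [pow_add, pow_mul, mul_pow, mul_pow, ← pow_mul, ← pow_mul]
  have h2 : (A*(C*zz))^(10*n+5) = A^(10*n+5)*(C^(10*n)*zz^(10*n)*(C*zz)^5) := by
    rw [mul_pow, h1]
  have h3 : (B*(C*zz))^(10*n+5) = B^(10*n+5)*(C^(10*n)*zz^(10*n)*(C*zz)^5) := by
    rw [mul_pow, h1]
  rw [h1, h2, h3]
  have h5 : (C*zz)^5 ≠ 0 := pow_ne_zero _ hv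
  have hC : C ≠ 0 := left_ne_zero_of_mul hv
  have hzz : zz ≠ 0 := right_ne_zero_of_mul hv
  field_simp

lemma etac_a : ((2 * Real.cos (2*π/5) : ℝ) : ℂ) = ηc^4 + ηc^16 := by
  have h4 : ((4:ℕ) * (π/10) : ℝ) = 2*π/5 := by push_cast; ring
  have h16 : ((16:ℕ) * (π/10) : ℝ) = 2*π - 2*π/5 := by push_cast; ring
  rw [etac_pow, etac_pow, h4, h16, Complex.exp_mul_I, Complex.exp_mul_I,
    ← Complex.ofReal_cos, ← Complex.ofReal_sin, ← Complex.ofReal_cos, ← Complex.ofReal_sin,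
    Real.cos_two_pi_sub, Real.sin_two_pi_sub]
  push_cast
  ring

lemma etac_b : ((2 * Real.cos (4*π/5) : ℝ) : ℂ) = ηc^8 + ηc^12 := by
  have h8 : ((8:ℕ) * (π/10) : ℝ) = 4*π/5 := by push_cast; ring
  have h12 : ((12:ℕ) * (π/10) : ℝ) = 2*π - 4*π/5 := by push_cast; ring
  rw [etac_pow, etac_pow, h8, h12, Complex.exp_mul_I, Complex.exp_mul_I,
    ← Complex.ofReal_cos, ← Complex.ofReal_sin, ← Complex.ofReal_cos, ← Complex.ofReal_sin,
    Real.cos_two_pi_sub, Real.sin_two_pi_sub]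
  push_cast
  ring

lemma hasSum_G2 (z : ℂ) (hz : z ≠ 0) :
    HasSum (fun n : ℕ =>
      ((10 * (2 * π) ^ (10 * n) / (Nat.factorial (10 * n + 5)) *
        (1 - (2 * Real.cos (2 * π / 5)) ^ (10 * n + 5)
           - (2 * Real.cos (4 * π / 5)) ^ (10 * n + 5)) : ℝ) : ℂ) * z ^ (10 * n))
      (∏ j ∈ Finset.range 5,
        (Complex.sin ((π:ℂ) * ηc ^ (2*j+1) * z) / ((π:ℂ) * ηc ^ (2*j+1) * z))) := by
  have hpi : ((π:ℝ) : ℂ) ≠ 0 := Complex.ofReal_ne_zero.mpr Real.pi_ne_zero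
  have hy : (2*(π:ℂ)*z) ≠ 0 := mul_ne_zero (mul_ne_zero two_ne_zero hpi) hz
  have hF : ∀ n : ℕ, ((Nat.factorial (10*n+5) : ℕ) : ℂ) ≠ 0 :=
    fun n => Nat.cast_ne_zero.mpr (Nat.factorial_ne_zero _)
  have H := (((hasSum_residue (2*(π:ℂ)*z)).sub
      (hasSum_residue (((2 * Real.cos (2*π/5) : ℝ) : ℂ) * (2*(π:ℂ)*z)))).sub
      (hasSum_residue (((2 * Real.cos (4*π/5) : ℝ) : ℂ) * (2*(π:ℂ)*z)))).mul_left
      (10 / (2*(π:ℂ)*z)^5)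
  simp only [show ∀ k : ℕ, ηc ^ (2*k) * (2*(π:ℂ)*z) = 2*(π:ℂ)*z*ηc^(2*k) from fun k => by ring,
    show ∀ k : ℕ, ηc ^ (2*k) * (((2 * Real.cos (2*π/5) : ℝ) : ℂ) * (2*(π:ℂ)*z))
        = 2*(π:ℂ)*z*((ηc^4+ηc^16)*ηc^(2*k)) from fun k => by rw [etac_a]; ring,
    show ∀ k : ℕ, ηc ^ (2*k) * (((2 * Real.cos (4*π/5) : ℝ) : ℂ) * (2*(π:ℂ)*z))
        = 2*(π:ℂ)*z*((ηc^8+ηc^12)*ηc^(2*k)) from fun k => by rw [etac_b]; ring] at H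
  refine hasSum_ext (fun n => ?_) ?_ H
  · -- coefficient identity
    have hcast : ((10 * (2 * π) ^ (10 * n) / (Nat.factorial (10 * n + 5)) *
        (1 - (2 * Real.cos (2 * π / 5)) ^ (10 * n + 5)
           - (2 * Real.cos (4 * π / 5)) ^ (10 * n + 5)) : ℝ) : ℂ)
        = 10 * (2*(π:ℂ))^(10*n) / ((Nat.factorial (10*n+5) : ℕ) : ℂ) *
          (1 - ((2 * Real.cos (2*π/5) : ℝ) : ℂ)^(10*n+5)
             - ((2 * Real.cos (4*π/5) : ℝ) : ℂ)^(10*n+5)) := by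
      push_cast
      try ring
    rw [hcast]
    exact coef_id _ _ _ _ _ n hy (hF n)
  · -- value identity
    have hprod : ∏ j ∈ Finset.range 5, ((π:ℂ) * ηc ^ (2*j+1) * z) = (π:ℂ)^5 * z^5 * Complex.I := by
      rw [Finset.prod_range_succ, Finset.prod_range_succ, Finset.prod_range_succ,
        Finset.prod_range_succ, Finset.prod_range_one]
      linear_combination ((π:ℂ)^5*z^5*ηc^5) * etac_20 + ((π:ℂ)^5*z^5) * etac_5
    have hsplit : ∑ k ∈ Finset.range 10, (-1 : ℂ)^k *
        (Complex.exp (2*(π:ℂ)*z*ηc^(2*k)) - Complex.exp (2*(π:ℂ)*z*((ηc^4+ηc^16)*ηc^(2*k)))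
          - Complex.exp (2*(π:ℂ)*z*((ηc^8+ηc^12)*ηc^(2*k))))
        = (∑ k ∈ Finset.range 10, (-1:ℂ)^k * Complex.exp (2*(π:ℂ)*z*ηc^(2*k)))
          - (∑ k ∈ Finset.range 10, (-1:ℂ)^k * Complex.exp (2*(π:ℂ)*z*((ηc^4+ηc^16)*ηc^(2*k))))
          - (∑ k ∈ Finset.range 10, (-1:ℂ)^k * Complex.exp (2*(π:ℂ)*z*((ηc^8+ηc^12)*ηc^(2*k)))) := by
      rw [← Finset.sum_sub_distrib, ← Finset.sum_sub_distrib]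
      exact Finset.sum_congr rfl fun k _ => by ring
    have hfin : ∀ SA SB SC : ℂ, 10/(2*(π:ℂ)*z)^5 * ((1/10)*SA - (1/10)*SB - (1/10)*SC)
        = Complex.I/32*(SA - SB - SC)/((π:ℂ)^5*z^5*Complex.I) := by
      intro SA SB SC
      have h32 : ((2*(π:ℂ)*z)^5) ≠ 0 := pow_ne_zero _ hy
      have hd : ((π:ℂ)^5*z^5*Complex.I) ≠ 0 :=
        mul_ne_zero (mul_ne_zero (pow_ne_zero _ hpi) (pow_ne_zero _ hz)) Complex.I_ne_zero
      field_simp [h32, hd]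
      ring
    rw [Finset.prod_div_distrib, hprod, sin_prod_eq z, hsplit]
    exact hfin _ _ _


open Real Complex Finset Filter Topology

lemma hpoly (K w : ℂ) : ∏ j ∈ Finset.range 5, (K^2 - ηc^(4*j+2)*w^2) = K^10 + w^10 := by
  rw [Finset.prod_range_succ, Finset.prod_range_succ, Finset.prod_range_succ,
    Finset.prod_range_succ, Finset.prod_range_one]
  linear_combination ((-1 : ℂ) * ηc ^ 42 * w ^ 10 + (-1 : ℂ) * ηc ^ 40 * w ^ 10 + (1 : ℂ) * ηc ^ 40 * K ^ 2 * w ^ 8 + (1 : ℂ) * ηc ^ 38 * K ^ 2 * w ^ 8 + (1 : ℂ) * ηc ^ 36 * K ^ 2 * w ^ 8 + (1 : ℂ) * ηc ^ 34 * K ^ 2 * w ^ 8 + (-1 : ℂ) * ηc ^ 34 * K ^ 4 * w ^ 6 + (1 : ℂ) * ηc ^ 32 * w ^ 10 + (1 : ℂ) * ηc ^ 32 * K ^ 2 * w ^ 8 + (-1 : ℂ) * ηc ^ 32 * K ^ 4 * w ^ 6 + (1 : ℂ) * ηc ^ 30 * w ^ 10 + (-1 : ℂ) * ηc ^ 30 *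 K ^ 4 * w ^ 6 + (-1 : ℂ) * ηc ^ 28 * K ^ 4 * w ^ 6 + (-2 : ℂ) * ηc ^ 26 * K ^ 4 * w ^ 6 + (-1 : ℂ) * ηc ^ 24 * K ^ 4 * w ^ 6 + (1 : ℂ) * ηc ^ 24 * K ^ 6 * w ^ 4 + (-1 : ℂ) * ηc ^ 22 * w ^ 10 + (-1 : ℂ) * ηc ^ 22 * K ^ 4 * w ^ 6 + (1 : ℂ) * ηc ^ 22 * K ^ 6 * w ^ 4 + (-1 : ℂ) * ηc ^ 20 * w ^ 10 + (-1 : ℂ) * ηc ^ 20 * K ^ 4 * w ^ 6 + (1 : ℂ) * ηc ^ 20 * K ^ 6 * w ^ 4 + (-1 : ℂ) * ηc ^ 18 * K ^ 4 * w ^ 6 + (1 : ℂ) * ηc ^ 18 * K ^ 6 * w ^ 4 + (2 : ℂ) * ηc ^ 16 * K ^ 6 * w ^ 4 + (1 : ℂ) * ηc ^ 14 * K ^ 6 * w ^ 4 + (1 : ℂ) * ηc ^ 12 * w ^ 10 + (1 : ℂ) * ηc ^ 12 * K ^ 6 * w ^ 4 + (1 : ℂ) * ηc ^ 10 * w ^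 10 + (1 : ℂ) * ηc ^ 10 * K ^ 6 * w ^ 4 + (-1 : ℂ) * ηc ^ 10 * K ^ 8 * w ^ 2 + (1 : ℂ) * ηc ^ 8 * K ^ 6 * w ^ 4 + (-1 : ℂ) * ηc ^ 8 * K ^ 8 * w ^ 2 + (-1 : ℂ) * ηc ^ 6 * K ^ 8 * w ^ 2 + (-1 : ℂ) * ηc ^ 4 * K ^ 8 * w ^ 2 + (-1 : ℂ) * ηc ^ 2 * w ^ 10 + (-1 : ℂ) * ηc ^ 2 * K ^ 8 * w ^ 2 + (-1 : ℂ) * w ^ 10) * etac_phi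

lemma hfact (z : ℂ) (k : ℕ) :
    ∏ j ∈ Finset.range 5, (1 - (ηc^(2*j+1)*z)^2/((k:ℂ)+1)^2) = 1 + z^10/((k:ℂ)+1)^10 := by
  have hK : ((k:ℂ)+1) ≠ 0 := by
    have : (((k+1 : ℕ) : ℂ)) ≠ 0 := Nat.cast_ne_zero.mpr (Nat.succ_ne_zero k)
    push_cast at this
    exact this
  have step : ∀ j : ℕ, 1 - (ηc^(2*j+1)*z)^2/((k:ℂ)+1)^2
      = (((k:ℂ)+1)^2 - ηc^(4*j+2)*z^2)/((k:ℂ)+1)^2 := by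
    intro j
    have hpow : (ηc^(2*j+1))^2 = ηc^(4*j+2) := by
      rw [← pow_mul]; congr 1; ring
    field_simp
    linear_combination (-(z^2)) * hpow
  rw [Finset.prod_congr rfl (fun j _ => step j), Finset.prod_div_distrib, hpoly,
    Finset.prod_const, Finset.card_range, ← pow_mul]
  norm_num
  rw [add_div, div_self (pow_ne_zero 10 hK)]

lemma euler_limit (z : ℂ) (hz : z ≠ 0) :
    Tendsto (fun N => ∏ k ∈ Finset.range N, (1 + z^10 / ((k:ℂ)+1)^10)) atTop
      (𝓝 (∏ j ∈ Finset.range 5,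
        (Complex.sin ((π:ℂ) * ηc ^ (2*j+1) * z) / ((π:ℂ) * ηc ^ (2*j+1) * z)))) := by
  have hpi : ((π:ℝ) : ℂ) ≠ 0 := Complex.ofReal_ne_zero.mpr Real.pi_ne_zero
  have hj : ∀ j ∈ Finset.range 5, Tendsto (fun N => ∏ k ∈ Finset.range N,
      (1 - (ηc^(2*j+1)*z)^2/((k:ℂ)+1)^2)) atTop
      (𝓝 (Complex.sin ((π:ℂ) * ηc^(2*j+1) * z) / ((π:ℂ) * ηc^(2*j+1) * z))) := by
    intro j _
    have hα : ((π:ℂ) * (ηc^(2*j+1)*z)) ≠ 0 :=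
      mul_ne_zero hpi (mul_ne_zero (pow_ne_zero _ (Complex.exp_ne_zero _)) hz)
    have h := (Complex.tendsto_euler_sin_prod (ηc^(2*j+1)*z)).div_const ((π:ℂ) * (ηc^(2*j+1)*z))
    have h2 := h.congr (fun N => mul_div_cancel_left₀ _ hα)
    rw [show (π:ℂ) * ηc^(2*j+1) * z = (π:ℂ) * (ηc^(2*j+1)*z) by ring]
    exact h2
  have hprod := tendsto_finset_prod (Finset.range 5) hj
  refine hprod.congr (fun N => ?_)
  rw [Finset.prod_comm]
  exact Finset.prod_congr rfl (fun k _ => hfact z k)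


open Real Finset Filter Topology

noncomputable def wts (k : ℕ) : ℝ := (((k:ℝ)+1)^(10:ℕ))⁻¹

lemma wts_nonneg (k : ℕ) : 0 ≤ wts k := by
  rw [wts]; positivity

lemma wts_summable : Summable wts := by
  have h : Summable (fun k : ℕ => (1:ℝ) / (k:ℝ)^(10:ℕ)) :=
    Real.summable_one_div_nat_pow.mpr (by norm_num)
  have h2 := (summable_nat_add_iff 1).mpr h
  refine h2.congr (fun k => ?_)
  rw [wts]
  push_cast
  rw [one_div]

lemma prod_eq_sum_powerset (t : ℝ) (N : ℕ) :
    ∏ k ∈ Finset.range N, (1 + t * wts k)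
      = ∑ s ∈ (Finset.range N).powerset, t^s.card * ∏ k ∈ s, wts k := by
  rw [Finset.prod_congr rfl (fun k _ => add_comm 1 (t * wts k)), Finset.prod_add]
  refine Finset.sum_congr rfl (fun s _ => ?_)
  rw [Finset.prod_const_one, mul_one, Finset.prod_mul_distrib, Finset.prod_const]

lemma powerset_cover (T : Finset (Finset ℕ)) :
    T ⊆ (Finset.range ((T.sup fun s => s.sup id) + 1)).powerset := by
  intro s hs
  rw [Finset.mem_powerset]
  intro k hk
  rw [Finset.mem_range]
  have h1 : k ≤ s.sup id := Finset.le_sup (f := id) hk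
  have h2 : s.sup id ≤ T.sup (fun s => s.sup id) := Finset.le_sup (f := fun s => s.sup id) hs
  omega

lemma g_nonneg {t : ℝ} (ht : 0 ≤ t) (s : Finset ℕ) : 0 ≤ t^s.card * ∏ k ∈ s, wts k :=
  mul_nonneg (pow_nonneg ht _) (Finset.prod_nonneg fun k _ => wts_nonneg k)

lemma sum_powerset_le {t : ℝ} (ht : 0 ≤ t) (N : ℕ) :
    ∑ s ∈ (Finset.range N).powerset, t^s.card * ∏ k ∈ s, wts k
      ≤ Real.exp (t * ∑' k, wts k) := by
  rw [← prod_eq_sum_powerset]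
  calc ∏ k ∈ Finset.range N, (1 + t * wts k)
      ≤ ∏ k ∈ Finset.range N, Real.exp (t * wts k) := by
        refine Finset.prod_le_prod (fun k _ => ?_) (fun k _ => ?_)
        · have := mul_nonneg ht (wts_nonneg k)
          linarith
        · have := Real.add_one_le_exp (t * wts k)
          linarith
    _ = Real.exp (∑ k ∈ Finset.range N, t * wts k) := (Real.exp_sum _ _).symm
    _ ≤ Real.exp (t * ∑' k, wts k) := by
        rw [Real.exp_le_exp, ← Finset.mul_sum]
        exact mul_le_mul_of_nonneg_left
          (Summable.sum_le_tsum (Finset.range N) (fun k _ => wts_nonneg k) wts_summable) ht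

lemma summable_g {t : ℝ} (ht : 0 ≤ t) :
    Summable (fun s : Finset ℕ => t^s.card * ∏ k ∈ s, wts k) := by
  refine summable_of_sum_le (c := Real.exp (t * ∑' k, wts k)) (fun s => g_nonneg ht s) (fun T => ?_)
  calc ∑ s ∈ T, t^s.card * ∏ k ∈ s, wts k
      ≤ ∑ s ∈ (Finset.range ((T.sup fun s => s.sup id) + 1)).powerset,
          t^s.card * ∏ k ∈ s, wts k :=
        Finset.sum_le_sum_of_subset_of_nonneg (powerset_cover T) (fun s _ _ => g_nonneg ht s)
    _ ≤ Real.exp (t * ∑' k, wts k) := sum_powerset_le ht _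

noncomputable def Mlim (t : ℝ) : ℝ := ∑' s : Finset ℕ, t^s.card * ∏ k ∈ s, wts k

lemma tendsto_prod_Mlim {t : ℝ} (ht : 0 ≤ t) :
    Tendsto (fun N => ∏ k ∈ Finset.range N, (1 + t * wts k)) atTop (𝓝 (Mlim t)) := by
  have h : HasSum (fun s : Finset ℕ => t^s.card * ∏ k ∈ s, wts k) (Mlim t) :=
    (summable_g ht).hasSum
  have h' : Tendsto (fun T : Finset (Finset ℕ) => ∑ s ∈ T, t^s.card * ∏ k ∈ s, wts k)
      atTop (𝓝 (Mlim t)) := h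
  have hcof : Tendsto (fun N : ℕ => (Finset.range N).powerset) atTop atTop := by
    refine tendsto_atTop_atTop_of_monotone
      (fun a b hab => Finset.powerset_mono.mpr (Finset.range_subset_range.mpr hab)) (fun T => ?_)
    exact ⟨(T.sup fun s => s.sup id) + 1, powerset_cover T⟩
  exact (h'.comp hcof).congr (fun N => (prod_eq_sum_powerset t N).symm)

noncomputable def Zfin (n : ℕ) : ℝ := ∑' s : {s : Finset ℕ // s.card = n}, ∏ k ∈ s.1, wts k

lemma summable_prod_wts : Summable (fun s : Finset ℕ => ∏ k ∈ s, wts k) := by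
  refine (summable_g (t := 1) zero_le_one).congr (fun s => ?_)
  rw [one_pow, one_mul]

lemma Zfin_nonneg (n : ℕ) : 0 ≤ Zfin n :=
  tsum_nonneg (fun s => Finset.prod_nonneg fun k _ => wts_nonneg k)

lemma hasSum_Zfin {t : ℝ} (ht : 0 ≤ t) :
    HasSum (fun n : ℕ => t^n * Zfin n) (Mlim t) := by
  have H : HasSum (fun s : Finset ℕ => t^s.card * ∏ k ∈ s, wts k) (Mlim t) :=
    (summable_g ht).hasSum
  have H2 := ((Equiv.sigmaFiberEquiv (fun s : Finset ℕ => s.card)).hasSum_iff).2 H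
  refine HasSum.sigma H2 (fun n => ?_)
  have hs : Summable (fun s : {s : Finset ℕ // s.card = n} => ∏ k ∈ s.1, wts k) :=
    summable_prod_wts.subtype _
  have h1 : HasSum (fun s : {s : Finset ℕ // s.card = n} => t^n * ∏ k ∈ s.1, wts k)
      (t^n * Zfin n) := hs.hasSum.mul_left _
  have hfun : (fun s : {s : Finset ℕ // s.card = n} => t^n * ∏ k ∈ s.1, wts k)
      = (fun s : {s : Finset ℕ // s.card = n} => t^s.1.card * ∏ k ∈ s.1, wts k) :=
    funext fun s => by rw [s.2]
  rw [hfun] at h1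
  exact h1


open Real Finset

noncomputable def finEquiv (n : ℕ) :
    {s : Finset ℕ // s.card = n} ≃ {f : Fin n → ℕ // (∀ i, 1 ≤ f i) ∧ StrictMono f} where
  toFun s := ⟨fun i => (s.1.orderEmbOfFin s.2 i) + 1,
    ⟨fun i => Nat.le_add_left 1 _,
     fun i j hij => by
      have := (s.1.orderEmbOfFin s.2).strictMono hij
      show s.1.orderEmbOfFin s.2 i + 1 < s.1.orderEmbOfFin s.2 j + 1
      omega⟩⟩
  invFun f := ⟨Finset.univ.image (fun i => f.1 i - 1), by
    rw [Finset.card_image_of_injective _ ?inj, Finset.card_univ, Fintype.card_fin]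
    case inj =>
      intro i j hij
      have hij' : f.1 i - 1 = f.1 j - 1 := hij
      have h1 := f.2.1 i
      have h2 := f.2.1 j
      have : f.1 i = f.1 j := by omega
      exact f.2.2.injective this⟩
  left_inv s := by
    apply Subtype.ext
    simp only []
    have himg : ∀ x, x ∈ Finset.univ.image (fun i => (s.1.orderEmbOfFin s.2 i) + 1 - 1) ↔ x ∈ s.1 := by
      intro x
      rw [Finset.mem_image]
      constructor
      · rintro ⟨i, _, rfl⟩
        simpa using Finset.orderEmbOfFin_mem s.1 s.2 i
      · intro hx
        have : x ∈ Set.range (s.1.orderEmbOfFin s.2) := by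
          rw [Finset.range_orderEmbOfFin]
          exact hx
        obtain ⟨i, hi⟩ := this
        exact ⟨i, Finset.mem_univ i, by omega⟩
    exact Finset.ext himg
  right_inv f := by
    apply Subtype.ext
    funext i
    simp only []
    have hmono : StrictMono (fun i => f.1 i - 1) := by
      intro i j hij
      have h1 := f.2.1 i
      have := f.2.2 hij
      simp only []
      omega
    have hcard : (Finset.univ.image (fun i => f.1 i - 1)).card = n := by
      rw [Finset.card_image_of_injective _ hmono.injective, Finset.card_univ, Fintype.card_fin]
    have huniq := Finset.orderEmbOfFin_unique hcard
      (f := fun i => f.1 i - 1)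
      (fun i => Finset.mem_image_of_mem _ (Finset.mem_univ i)) hmono
    have h1 := f.2.1 i
    have := congrFun huniq.symm i
    omega

lemma rpow_wts (m : ℕ) : ((m:ℝ)+1) ^ (-(10:ℝ)) = wts m := by
  have hx : (0:ℝ) ≤ (m:ℝ)+1 := by positivity
  rw [wts, Real.rpow_neg hx, show (10:ℝ) = ((10:ℕ):ℝ) by norm_num, Real.rpow_natCast]

lemma prod_terms (n : ℕ) (s : {s : Finset ℕ // s.card = n}) :
    (∏ i : Fin n, ((((finEquiv n) s).1 i : ℝ)) ^ (-(10:ℝ))) = ∏ k ∈ s.1, wts k := by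
  have hterm : ∀ i : Fin n, ((((finEquiv n) s).1 i : ℝ)) ^ (-(10:ℝ))
      = wts (s.1.orderEmbOfFin s.2 i) := by
    intro i
    have : ((((finEquiv n) s).1 i : ℕ) : ℝ) = ((s.1.orderEmbOfFin s.2 i : ℕ) : ℝ) + 1 := by
      show (((s.1.orderEmbOfFin s.2 i) + 1 : ℕ) : ℝ) = _
      push_cast
      ring
    rw [this, rpow_wts]
  rw [Finset.prod_congr rfl (fun i _ => hterm i)]
  refine Finset.prod_bij (fun (i : Fin n) _ => s.1.orderEmbOfFin s.2 i) ?_ ?_ ?_ ?_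
  · intro i _
    exact Finset.orderEmbOfFin_mem s.1 s.2 i
  · intro i _ j _ hij
    exact (s.1.orderEmbOfFin s.2).injective hij
  · intro k hk
    have : k ∈ Set.range (s.1.orderEmbOfFin s.2) := by
      rw [Finset.range_orderEmbOfFin]; exact hk
    obtain ⟨i, hi⟩ := this
    exact ⟨i, Finset.mem_univ i, hi⟩
  · intro i _
    rfl


open Real Finset Filter Topology

noncomputable def Rcoef (n : ℕ) : ℝ :=
  10 * (2 * π) ^ (10 * n) / (Nat.factorial (10 * n + 5)) *
    (1 - (2 * Real.cos (2 * π / 5)) ^ (10 * n + 5)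
       - (2 * Real.cos (4 * π / 5)) ^ (10 * n + 5))

lemma Rcoef_hasSum {t : ℝ} (ht : 0 < t) : HasSum (fun n => Rcoef n * t^n) (Mlim t) := by
  have hz0 : 0 < t ^ ((10:ℝ)⁻¹) := Real.rpow_pos_of_pos ht _
  have hz10 : (t ^ ((10:ℝ)⁻¹)) ^ (10:ℕ) = t := Real.rpow_inv_natCast_pow ht.le (by norm_num)
  set zr := t ^ ((10:ℝ)⁻¹) with hzr
  have hzC : ((zr:ℂ)) ≠ 0 := Complex.ofReal_ne_zero.mpr hz0.ne'
  have HG := hasSum_G2 (zr:ℂ) hzC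
  have HB := euler_limit (zr:ℂ) hzC
  have HrealC : Tendsto (fun N => ((∏ k ∈ Finset.range N, (1 + t * wts k) : ℝ) : ℂ)) atTop
      (𝓝 ((Mlim t : ℝ) : ℂ)) :=
    (Complex.continuous_ofReal.tendsto _).comp (tendsto_prod_Mlim ht.le)
  have hfuneq : ∀ N : ℕ, ((∏ k ∈ Finset.range N, (1 + t * wts k) : ℝ) : ℂ)
      = ∏ k ∈ Finset.range N, (1 + (zr:ℂ)^10 / ((k:ℂ)+1)^10) := by
    intro N
    rw [Complex.ofReal_prod]
    refine Finset.prod_congr rfl fun k _ => ?_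
    rw [wts, ← hz10]
    push_cast
    ring
  have HrealC2 : Tendsto (fun N => ∏ k ∈ Finset.range N, (1 + (zr:ℂ)^10 / ((k:ℂ)+1)^10)) atTop
      (𝓝 ((Mlim t : ℝ) : ℂ)) := HrealC.congr hfuneq
  have huniq : (∏ j ∈ Finset.range 5,
      (Complex.sin ((π:ℂ) * ηc ^ (2*j+1) * (zr:ℂ)) / ((π:ℂ) * ηc ^ (2*j+1) * (zr:ℂ))))
      = ((Mlim t : ℝ) : ℂ) := tendsto_nhds_unique HB HrealC2
  rw [huniq] at HG
  have hfn : ∀ n : ℕ, ((10 * (2 * π) ^ (10 * n) / (Nat.factorial (10 * n + 5)) *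
        (1 - (2 * Real.cos (2 * π / 5)) ^ (10 * n + 5)
           - (2 * Real.cos (4 * π / 5)) ^ (10 * n + 5)) : ℝ) : ℂ) * (zr:ℂ) ^ (10 * n)
      = ((Rcoef n * t^n : ℝ) : ℂ) := by
    intro n
    rw [Rcoef, ← hz10]
    push_cast
    rw [pow_mul]
    ring
  rw [show (fun n : ℕ => ((10 * (2 * π) ^ (10 * n) / (Nat.factorial (10 * n + 5)) *
        (1 - (2 * Real.cos (2 * π / 5)) ^ (10 * n + 5)
           - (2 * Real.cos (4 * π / 5)) ^ (10 * n + 5)) : ℝ) : ℂ) * (zr:ℂ) ^ (10 * n))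
      = (fun n : ℕ => ((Rcoef n * t^n : ℝ) : ℂ)) from funext hfn] at HG
  exact (Complex.hasSum_ofReal).mp HG

lemma Rcoef_nonneg (n : ℕ) : 0 ≤ Rcoef n := by
  have hpi := Real.pi_pos
  have ha0 : 0 < Real.cos (2*π/5) := by
    apply Real.cos_pos_of_mem_Ioo
    constructor <;> nlinarith
  have ha1 : Real.cos (2*π/5) < 1/2 := by
    have := Real.cos_pi_div_three
    calc Real.cos (2*π/5) < Real.cos (π/3) := by
          apply Real.cos_lt_cos_of_nonneg_of_le_pi <;> nlinarith
      _ = 1/2 := Real.cos_pi_div_three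
  have hb0 : Real.cos (4*π/5) < 0 := by
    apply Real.cos_neg_of_pi_div_two_lt_of_lt <;> nlinarith
  have hodd : Odd (10*n+5) := ⟨5*n+2, by ring⟩
  have hbpow : (2 * Real.cos (4*π/5)) ^ (10*n+5) ≤ 0 :=
    Odd.pow_nonpos hodd (by linarith)
  have hapow : (2 * Real.cos (2*π/5)) ^ (10*n+5) < 1 := by
    apply pow_lt_one₀ (by linarith) (by linarith)
    omega
  have h2 : 0 ≤ 1 - (2 * Real.cos (2*π/5)) ^ (10*n+5) - (2 * Real.cos (4*π/5)) ^ (10*n+5) := by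
    linarith
  rw [Rcoef]
  positivity


open Real Finset Filter Topology

lemma coeff_unique {f g : ℕ → ℝ} (hf0 : ∀ n, 0 ≤ f n) (hg0 : ∀ n, 0 ≤ g n)
    (hs : ∀ t : ℝ, 0 < t → t ≤ 1 → ∃ L, HasSum (fun n => f n * t^n) L ∧
      HasSum (fun n => g n * t^n) L) :
    ∀ n, f n = g n := by
  intro m
  induction m using Nat.strong_induction_on with
  | _ m ih =>
  obtain ⟨L1, hf1, hg1⟩ := hs 1 one_pos le_rfl
  have hfs : Summable f := by simpa using hf1.summable
  have hgs : Summable g := by simpa using hg1.summable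
  have hfs' : Summable (fun n => f (n + (m+1))) := (summable_nat_add_iff (m+1)).mpr hfs
  have hgs' : Summable (fun n => g (n + (m+1))) := (summable_nat_add_iff (m+1)).mpr hgs
  set Cf : ℝ := ∑' n, f (n + (m+1)) with hCf
  set Cg : ℝ := ∑' n, g (n + (m+1)) with hCg
  have hCf0 : 0 ≤ Cf := tsum_nonneg (fun n => hf0 _)
  have hCg0 : 0 ≤ Cg := tsum_nonneg (fun n => hg0 _)
  have key : ∀ t : ℝ, 0 < t → t ≤ 1 → |f m - g m| ≤ t * (Cf + Cg) := by
    intro t ht ht1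
    obtain ⟨L, hf, hg⟩ := hs t ht ht1
    have hfsum := hf.summable
    have hgsum := hg.summable
    -- summability of shifted series in tⁿ form
    have hshift : ∀ (h : ℕ → ℝ), (∀ n, 0 ≤ h n) → Summable h →
        ∀ j : ℕ, Summable (fun n => h (n + j) * t^n) := by
      intro h h0 hsum j
      refine Summable.of_nonneg_of_le (fun n => mul_nonneg (h0 _) (pow_nonneg ht.le _))
        (fun n => ?_) ((summable_nat_add_iff j).mpr hsum)
      calc h (n + j) * t^n ≤ h (n + j) * 1 :=
            mul_le_mul_of_nonneg_left (pow_le_one₀ ht.le ht1) (h0 _)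
        _ = h (n + j) := mul_one _
    -- tail equality at level m, with t^m factored out
    have htails : ∑' n, f (n+m) * t^n = ∑' n, g (n+m) * t^n := by
      have h1 := Summable.sum_add_tsum_nat_add (f := fun n => f n * t^n) m hfsum
      have h2 := Summable.sum_add_tsum_nat_add (f := fun n => g n * t^n) m hgsum
      have hhead : ∑ i ∈ Finset.range m, f i * t^i = ∑ i ∈ Finset.range m, g i * t^i :=
        Finset.sum_congr rfl fun i hi => by rw [ih i (Finset.mem_range.mp hi)]
      have htot : (∑' n, f n * t^n) = ∑' n, g n * t^n := by
        rw [hf.tsum_eq, hg.tsum_eq]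
      have hft : ∑' n, f (n+m) * t^(n+m) = (∑' n, f (n+m) * t^n) * t^m := by
        rw [← tsum_mul_right]
        exact tsum_congr fun n => by rw [pow_add]; ring
      have hgt : ∑' n, g (n+m) * t^(n+m) = (∑' n, g (n+m) * t^n) * t^m := by
        rw [← tsum_mul_right]
        exact tsum_congr fun n => by rw [pow_add]; ring
      have heq : (∑' n, f (n+m) * t^n) * t^m = (∑' n, g (n+m) * t^n) * t^m := by
        rw [← hft, ← hgt]
        linarith
      exact mul_right_cancel₀ (pow_ne_zero m ht.ne') heq
    -- expand one step
    have hfm : ∑' n, f (n+m) * t^n = f m + t * ∑' n, f (n+(m+1)) * t^n := by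
      have h3 := Summable.sum_add_tsum_nat_add (f := fun n => f (n+m) * t^n) 1 (hshift f hf0 hfs m)
      have h4 : ∑' n, f (n+1+m) * t^(n+1) = t * ∑' n, f (n+(m+1)) * t^n := by
        rw [← tsum_mul_left]
        exact tsum_congr fun n => by
          rw [show n+1+m = n+(m+1) from by omega, pow_succ]
          ring
      have h5 : ∑ i ∈ Finset.range 1, f (i+m) * t^i = f m := by
        rw [Finset.sum_range_one, pow_zero, mul_one, Nat.zero_add]
      linarith [h3, h4, h5]
    have hgm : ∑' n, g (n+m) * t^n = g m + t * ∑' n, g (n+(m+1)) * t^n := by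
      have h3 := Summable.sum_add_tsum_nat_add (f := fun n => g (n+m) * t^n) 1 (hshift g hg0 hgs m)
      have h4 : ∑' n, g (n+1+m) * t^(n+1) = t * ∑' n, g (n+(m+1)) * t^n := by
        rw [← tsum_mul_left]
        exact tsum_congr fun n => by
          rw [show n+1+m = n+(m+1) from by omega, pow_succ]
          ring
      have h5 : ∑ i ∈ Finset.range 1, g (i+m) * t^i = g m := by
        rw [Finset.sum_range_one, pow_zero, mul_one, Nat.zero_add]
      linarith [h3, h4, h5]
    -- bounds on the remaining tails
    have hb1 : ∑' n, f (n+(m+1)) * t^n ≤ Cf := by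
      refine Summable.tsum_le_tsum (fun n => ?_) (hshift f hf0 hfs (m+1)) hfs'
      calc f (n+(m+1)) * t^n ≤ f (n+(m+1)) * 1 :=
            mul_le_mul_of_nonneg_left (pow_le_one₀ ht.le ht1) (hf0 _)
        _ = f (n+(m+1)) := mul_one _
    have hb2 : ∑' n, g (n+(m+1)) * t^n ≤ Cg := by
      refine Summable.tsum_le_tsum (fun n => ?_) (hshift g hg0 hgs (m+1)) hgs'
      calc g (n+(m+1)) * t^n ≤ g (n+(m+1)) * 1 :=
            mul_le_mul_of_nonneg_left (pow_le_one₀ ht.le ht1) (hg0 _)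
        _ = g (n+(m+1)) := mul_one _
    have hb3 : 0 ≤ ∑' n, f (n+(m+1)) * t^n :=
      tsum_nonneg fun n => mul_nonneg (hf0 _) (pow_nonneg ht.le _)
    have hb4 : 0 ≤ ∑' n, g (n+(m+1)) * t^n :=
      tsum_nonneg fun n => mul_nonneg (hg0 _) (pow_nonneg ht.le _)
    rw [abs_le]
    constructor <;> nlinarith [htails, hfm, hgm]
  by_contra hne
  have hpos : 0 < |f m - g m| := abs_pos.mpr (sub_ne_zero.mpr hne)
  set ε := |f m - g m|
  have ht0 : 0 < ε / (2*(Cf + Cg) + 1) := by positivity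
  set t := min 1 (ε / (2*(Cf + Cg) + 1)) with htdef
  have h1 : 0 < t := lt_min one_pos ht0
  have h2 : t ≤ 1 := min_le_left _ _
  have h3 := key t h1 h2
  have h4 : t ≤ ε / (2*(Cf + Cg) + 1) := min_le_right _ _
  have h5 : t * (Cf + Cg) ≤ (ε / (2*(Cf + Cg) + 1)) * (Cf + Cg) :=
    mul_le_mul_of_nonneg_right h4 (by linarith)
  have h6 : (ε / (2*(Cf + Cg) + 1)) * (Cf + Cg) < ε := by
    rw [div_mul_eq_mul_div, div_lt_iff₀ (by linarith)]
    nlinarith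
  linarith

lemma mzv_eq (n : ℕ) : mzv (fun _ : Fin n => (10:ℝ)) = Zfin n := by
  rw [Zfin]
  rw [show mzv (fun _ : Fin n => (10:ℝ))
      = ∑' f : {f : Fin n → ℕ // (∀ i, 1 ≤ f i) ∧ StrictMono f},
          ∏ i, ((f.1 i : ℝ)) ^ (-(10:ℝ)) from by simp only [mzv]]
  rw [← Equiv.tsum_eq (finEquiv n)
    (fun f : {f : Fin n → ℕ // (∀ i, 1 ≤ f i) ∧ StrictMono f} =>
      ∏ i, ((f.1 i : ℝ)) ^ (-(10:ℝ)))]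
  exact tsum_congr fun s => prod_terms n s

lemma Zfin_eq_Rcoef (n : ℕ) : Zfin n = Rcoef n := by
  refine coeff_unique Zfin_nonneg Rcoef_nonneg (fun t ht _ => ⟨Mlim t, ?_, Rcoef_hasSum ht⟩) n
  have h := hasSum_Zfin ht.le
  rw [show (fun k : ℕ => Zfin k * t^k) = (fun k : ℕ => t^k * Zfin k) from
    funext fun k => mul_comm _ _]
  exact h


/-- `ζ({10}^n) = (10 (2π)^{10n}/(10n+5)!) (1 - (2cos(2π/5))^{10n+5} - (2cos(4π/5))^{10n+5})`. -/
theorem zeta_ten_rep (n : ℕ) (hn : 1 ≤ n) :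
    mzv (fun _ : Fin n => (10 : ℝ)) =
      10 * (2 * π) ^ (10 * n) / (Nat.factorial (10 * n + 5)) *
        (1 - (2 * Real.cos (2 * π / 5)) ^ (10 * n + 5)
           - (2 * Real.cos (4 * π / 5)) ^ (10 * n + 5)) := by
  rw [mzv_eq, Zfin_eq_Rcoef, Rcoef]
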